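/- arXiv:1802.05623 — 10 statements merged into one kernel-verified Lean document; each statement's English description precedes it below -/
import Mathlib

section
/- For every vertex v and every i ∈ ℕ, the weight of v at consecutive levels satisfies W_v(i) ≤ (β + 1)·W_v(i + 1). -/
open scoped Classical

/-- `D_v(i)`: the number of neighbors of `v` whose level equals `i`. -/
noncomputable def levelCount {V : Type*} [Fintype V] (G : SimpleGraph V)
    (ℓ : V → ℕ) (v : V) (i : ℕ) : ℕ :=
  (Finset.univ.filter fun u => G.Adj v u ∧ ℓ u = i).card

/-- `D_v(i, j)`: the number of neighbors of `v` whose level lies in `[i, j]`. -/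
noncomputable def levelCountRange {V : Type*} [Fintype V] (G : SimpleGraph V)
    (ℓ : V → ℕ) (v : V) (i j : ℕ) : ℕ :=
  (Finset.univ.filter fun u => G.Adj v u ∧ i ≤ ℓ u ∧ ℓ u ≤ j).card

/-- The weight of a vertex `v`:
`W_v = min{k_v, D_v(0, ℓ(v))}·μ·β^(−ℓ(v)) + Σ_{i > ℓ(v)} min{k_v, D_v(i)}·μ·β^(−i)`. -/
noncomputable def vertexWeight {V : Type*} [Fintype V] (G : SimpleGraph V)
    (β μ : ℝ) (k : V → ℕ) (ℓ : V → ℕ) (v : V) : ℝ :=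
  (min (k v) (levelCountRange G ℓ v 0 (ℓ v)) : ℝ) * μ * β ^ (-(ℓ v : ℤ))
    + ∑' i : ℕ, if ℓ v < i then (min (k v) (levelCount G ℓ v i) : ℝ) * μ * β ^ (-(i : ℤ)) else 0

/-- For every vertex `v` and every `i ∈ ℕ`, the weight of `v` at consecutive levels satisfies
`W_v(i) ≤ (β + 1)·W_v(i + 1)`, where `W_v(j)` is the weight of `v` computed with the level of `v`
replaced by `j` and all other vertex levels unchanged. -/
theorem weight_consecutive_levels {V : Type*} [Fintype V] (G : SimpleGraph V)
    (c : V → ℝ) (k : V → ℕ) (β μ : ℝ) (ℓ : V → ℕ)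
    (hc : ∀ v, 0 < c v) (hk : ∀ v, 1 ≤ k v) (hβ : 1 < β) (hμ : ∀ v, c v < μ) :
    ∀ (v : V) (i : ℕ),
      vertexWeight G β μ k (Function.update ℓ v i) v
        ≤ (β + 1) * vertexWeight G β μ k (Function.update ℓ v (i + 1)) v := by
  intro v i
  have hμ0 : 0 < μ := lt_trans (hc v) (hμ v)
  have hβ0 : 0 < β := lt_trans one_pos hβ
  have hcount : ∀ m j, levelCount G (Function.update ℓ v m) v j = levelCount G ℓ v j := by
    intro m j
    unfold levelCount
    congr 1
    apply Finset.filter_congr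
    intro u _
    constructor
    · rintro ⟨ha, hb⟩
      exact ⟨ha, by rwa [Function.update_of_ne ha.ne'] at hb⟩
    · rintro ⟨ha, hb⟩
      exact ⟨ha, by rwa [Function.update_of_ne ha.ne']⟩
  have hrange : ∀ m j, levelCountRange G (Function.update ℓ v m) v 0 j = levelCountRange G ℓ v 0 j := by
    intro m j
    unfold levelCountRange
    congr 1
    apply Finset.filter_congr
    intro u _
    constructor
    · rintro ⟨ha, hb⟩
      exact ⟨ha, by rwa [Function.update_of_ne ha.ne'] at hb⟩
    · rintro ⟨ha, hb⟩
      exact ⟨ha, by rwa [Function.update_of_ne ha.ne']⟩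
  set h : ℕ → ℝ := fun j => (min (k v) (levelCount G ℓ v j) : ℝ) * μ * β ^ (-(j : ℤ)) with hh
  have hpow : ∀ j : ℕ, β ^ (-(j : ℤ)) = (β⁻¹) ^ j := by
    intro j
    rw [zpow_neg, zpow_natCast, inv_pow]
  have hpowpos : ∀ j : ℕ, 0 < β ^ (-(j : ℤ)) := fun j =>
    zpow_pos hβ0 _
  have hnn : ∀ j, 0 ≤ h j := fun j => by
    apply mul_nonneg (mul_nonneg (by positivity) hμ0.le) (hpowpos j).le
  have hgeo : Summable fun j : ℕ => (k v : ℝ) * μ * (β⁻¹) ^ j :=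
    Summable.mul_left _ (summable_geometric_of_lt_one (by positivity) (inv_lt_one_of_one_lt₀ hβ))
  have hsummable : Summable h := by
    refine Summable.of_nonneg_of_le hnn (fun j => ?_) hgeo
    rw [hh]
    simp only [hpow]
    apply mul_le_mul_of_nonneg_right _ (by positivity)
    apply mul_le_mul_of_nonneg_right _ hμ0.le
    exact_mod_cast min_le_left _ _
  have hsum1 : Summable fun j => if i + 1 < j then h j else 0 := by
    refine Summable.of_nonneg_of_le (fun j => by positivity) (fun j => ?_) hsummable
    split_ifs with hj
    · exact le_rfl
    · exact hnn j
  have hsum2 : Summable fun j => if (j : ℕ) = i + 1 then h j else 0 := by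
    apply summable_of_ne_finset_zero (s := {i + 1})
    intro j hj
    simp at hj
    simp [hj]
  have htsplit : (∑' j : ℕ, if i < j then h j else 0)
      = h (i + 1) + ∑' j : ℕ, if i + 1 < j then h j else 0 := by
    have heq : (fun j => if i < j then h j else 0)
        = fun j => (if j = i + 1 then h j else 0) + (if i + 1 < j then h j else 0) := by
      funext j
      rcases Nat.lt_trichotomy j (i + 1) with hj | hj | hj
      · rw [if_neg (by omega), if_neg (by omega), if_neg (by omega)]; ring
      · rw [if_pos (by omega), if_pos hj, if_neg (by omega)]; ring
      · rw [if_pos (by omega), if_neg (by omega), if_pos hj]; ring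
    rw [heq, Summable.tsum_add hsum2 hsum1]
    congr 1
    have : (fun j => if j = i + 1 then h j else 0) = fun j => if j = i + 1 then h (i+1) else 0 := by
      funext j
      split <;> simp_all
    rw [this, tsum_ite_eq]
  have hTnn : 0 ≤ ∑' j : ℕ, if i + 1 < j then h j else 0 :=
    tsum_nonneg fun j => by positivity
  -- rewrite both weights
  have hR : levelCountRange G ℓ v 0 i ≤ levelCountRange G ℓ v 0 (i + 1) := by
    apply Finset.card_le_card
    intro u hu
    simp only [Finset.mem_filter] at hu ⊢
    exact ⟨hu.1, hu.2.1, hu.2.2.1, hu.2.2.2.trans (Nat.le_succ _)⟩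
  have hD : levelCount G ℓ v (i + 1) ≤ levelCountRange G ℓ v 0 (i + 1) := by
    apply Finset.card_le_card
    intro u hu
    simp only [Finset.mem_filter] at hu ⊢
    exact ⟨hu.1, hu.2.1, Nat.zero_le _, le_of_eq hu.2.2⟩
  have ha : (min (k v) (levelCountRange G ℓ v 0 i) : ℝ)
      ≤ (min (k v) (levelCountRange G ℓ v 0 (i + 1)) : ℝ) := by
    exact_mod_cast min_le_min le_rfl hR
  have hd : (min (k v) (levelCount G ℓ v (i + 1)) : ℝ)
      ≤ (min (k v) (levelCountRange G ℓ v 0 (i + 1)) : ℝ) := by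
    exact_mod_cast min_le_min le_rfl hD
  have hp : (0:ℝ) < β ^ (-((i + 1 : ℕ) : ℤ)) := hpowpos _
  have hPP : β ^ (-(i : ℤ)) = β * β ^ (-((i + 1 : ℕ) : ℤ)) := by
    have he : (-(i : ℤ)) = 1 + (-((i + 1 : ℕ) : ℤ)) := by push_cast; ring
    rw [he, zpow_add₀ hβ0.ne', zpow_one]
  simp only [vertexWeight, Function.update_self, hcount, hrange]
  show (min (k v) (levelCountRange G ℓ v 0 i) : ℝ) * μ * β ^ (-(i : ℤ))
      + (∑' j : ℕ, if i < j then h j else 0)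
    ≤ (β + 1) * ((min (k v) (levelCountRange G ℓ v 0 (i + 1)) : ℝ) * μ * β ^ (-((i + 1 : ℕ) : ℤ))
      + ∑' j : ℕ, if i + 1 < j then h j else 0)
  rw [htsplit, hPP]
  have hhval : h (i + 1) = (min (k v) (levelCount G ℓ v (i + 1)) : ℝ) * μ * β ^ (-((i + 1 : ℕ) : ℤ)) := rfl
  rw [hhval]
  nlinarith [mul_le_mul_of_nonneg_right ha (mul_nonneg (mul_nonneg hμ0.le hβ0.le) hp.le),
    mul_le_mul_of_nonneg_right hd (mul_nonneg hμ0.le hp.le),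
    mul_nonneg hβ0.le hTnn, hTnn, mul_nonneg hμ0.le hp.le]
end

section
/- For every vertex v and every i ∈ ℕ such that D_v(0, i + 1) ≤ k_v, the weight of v at consecutive levels satisfies the sharper bound W_v(i) ≤ β·W_v(i + 1). -/
open scoped Classical

lemma levelCount_update {V : Type*} [Fintype V] (G : SimpleGraph V)
    (ℓ : V → ℕ) (v : V) (x j : ℕ) :
    levelCount G (Function.update ℓ v x) v j = levelCount G ℓ v j := by
  unfold levelCount
  congr 1
  apply Finset.filter_congr
  intro u _
  by_cases h : G.Adj v u
  · simp [h, Function.update_of_ne (G.ne_of_adj h).symm]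
  · simp [h]

lemma levelCountRange_update {V : Type*} [Fintype V] (G : SimpleGraph V)
    (ℓ : V → ℕ) (v : V) (x a b : ℕ) :
    levelCountRange G (Function.update ℓ v x) v a b = levelCountRange G ℓ v a b := by
  unfold levelCountRange
  congr 1
  apply Finset.filter_congr
  intro u _
  by_cases h : G.Adj v u
  · simp [h, Function.update_of_ne (G.ne_of_adj h).symm]
  · simp [h]

lemma levelCountRange_split {V : Type*} [Fintype V] (G : SimpleGraph V)
    (ℓ : V → ℕ) (v : V) (i : ℕ) :
    levelCountRange G ℓ v 0 (i + 1) = levelCountRange G ℓ v 0 i + levelCount G ℓ v (i + 1) := by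
  unfold levelCountRange levelCount
  rw [← Finset.card_union_of_disjoint]
  · congr 1
    rw [← Finset.filter_or]
    apply Finset.filter_congr
    intro u _
    constructor
    · rintro ⟨h, -, h2⟩
      rcases Nat.lt_or_ge (ℓ u) (i+1) with h3 | h3
      · exact Or.inl ⟨h, Nat.zero_le _, by omega⟩
      · exact Or.inr ⟨h, by omega⟩
    · rintro (⟨h, -, h2⟩ | ⟨h, h2⟩) <;> exact ⟨h, Nat.zero_le _, by omega⟩
  · rw [Finset.disjoint_filter]
    rintro u _ ⟨h, -, h2⟩ ⟨-, h3⟩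
    omega

/-- For every vertex `v` and every `i ∈ ℕ` with `D_v(0, i + 1) ≤ k_v`, the weight of `v` at
consecutive levels satisfies the sharper bound `W_v(i) ≤ β·W_v(i + 1)`. -/
theorem weight_consecutive_levels_sharp {V : Type*} [Fintype V] (G : SimpleGraph V)
    (c : V → ℝ) (k : V → ℕ) (β μ : ℝ) (ℓ : V → ℕ)
    (hc : ∀ v, 0 < c v) (hk : ∀ v, 1 ≤ k v) (hβ : 1 < β) (hμ : ∀ v, c v < μ) :
    ∀ (v : V) (i : ℕ), levelCountRange G ℓ v 0 (i + 1) ≤ k v →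
      vertexWeight G β μ k (Function.update ℓ v i) v
        ≤ β * vertexWeight G β μ k (Function.update ℓ v (i + 1)) v := by
  intro v i hcap
  have hμ0 : 0 < μ := (hc v).trans (hμ v)
  have hβ0 : 0 < β := lt_trans one_pos hβ
  have hf_nonneg : ∀ j : ℕ, 0 ≤ (min (k v) (levelCount G ℓ v j) : ℝ) * μ * β ^ (-(j : ℤ)) :=
    fun j => mul_nonneg (mul_nonneg (le_min (Nat.cast_nonneg _) (Nat.cast_nonneg _)) hμ0.le) (zpow_pos hβ0 _).le
  set f : ℕ → ℝ := fun j => (min (k v) (levelCount G ℓ v j) : ℝ) * μ * β ^ (-(j : ℤ)) with hfdef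
  have hsumg : Summable (fun j : ℕ => ((k v : ℝ) * μ) * (β⁻¹) ^ j) :=
    Summable.mul_left _ (summable_geometric_of_lt_one (by positivity) (inv_lt_one_of_one_lt₀ hβ))
  have hle : ∀ j : ℕ, f j ≤ ((k v : ℝ) * μ) * (β⁻¹) ^ j := by
    intro j
    show (min (k v) (levelCount G ℓ v j) : ℝ) * μ * β ^ (-(j : ℤ)) ≤ _
    rw [zpow_neg, zpow_natCast, ← inv_pow]
    exact mul_le_mul_of_nonneg_right
      (mul_le_mul_of_nonneg_right (min_le_left _ _) hμ0.le) (by positivity)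
  have hsumf : Summable f := Summable.of_nonneg_of_le hf_nonneg hle hsumg
  have hite_nonneg : ∀ (m j : ℕ), 0 ≤ (if m < j then f j else 0) := by
    intro m j
    by_cases h : m < j <;> simp [h, hf_nonneg j] <;> exact hf_nonneg j
  have hsum : ∀ m : ℕ, Summable fun j => if m < j then f j else 0 := by
    intro m
    apply Summable.of_nonneg_of_le (hite_nonneg m) _ hsumf
    intro j
    by_cases h : m < j <;> simp [h, hf_nonneg j] <;> exact hf_nonneg j
  unfold vertexWeight
  simp only [Function.update_self, levelCount_update, levelCountRange_update, ← hfdef]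
  have hsplit : (∑' j : ℕ, if i < j then f j else 0)
      = f (i + 1) + ∑' j : ℕ, if i + 1 < j then f j else 0 := by
    have hpt : ∀ j : ℕ, (if i < j then f j else 0)
        = (if j = i + 1 then f (i + 1) else 0) + (if i + 1 < j then f j else 0) := by
      intro j
      by_cases h1 : j = i + 1
      · subst h1; simp
      · by_cases h2 : i + 1 < j
        · rw [if_pos (by omega), if_neg h1, if_pos h2, zero_add]
        · rw [if_neg (by omega), if_neg h1, if_neg h2, zero_add]
    rw [tsum_congr hpt, Summable.tsum_add ((hasSum_ite_eq (i+1) (f (i+1))).summable) (hsum (i+1)),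
      tsum_ite_eq]
  rw [hsplit]
  set T : ℝ := ∑' j : ℕ, if i + 1 < j then f j else 0 with hT
  have hT0 : 0 ≤ T := tsum_nonneg (hite_nonneg (i+1))
  set A : ℝ := (min (k v) (levelCountRange G ℓ v 0 i) : ℝ) with hA
  set B : ℝ := (min (k v) (levelCountRange G ℓ v 0 (i + 1)) : ℝ) with hB
  have hpow : β * β ^ (-((i : ℤ) + 1)) = β ^ (-(i : ℤ)) := by
    rw [mul_comm, ← zpow_add_one₀ hβ0.ne']
    norm_num
  have hrhs : β * (B * μ * β ^ (-((i : ℕ) + 1 : ℕ) : ℤ) + T)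
      = B * μ * β ^ (-(i : ℤ)) + β * T := by
    rw [mul_add]
    congr 1
    rw [show (-((i : ℕ) + 1 : ℕ) : ℤ) = -((i : ℤ) + 1) by push_cast; ring]
    rw [show β * (B * μ * β ^ (-((i : ℤ) + 1))) = B * μ * (β * β ^ (-((i : ℤ) + 1))) by ring,
      hpow]
  rw [hrhs]
  have hBval : B = (levelCountRange G ℓ v 0 i : ℝ) + (levelCount G ℓ v (i + 1) : ℝ) := by
    rw [hB, min_eq_right (by exact_mod_cast hcap), levelCountRange_split]
    push_cast
    ring
  have hfle : f (i + 1) ≤ (levelCount G ℓ v (i + 1) : ℝ) * μ * β ^ (-(i : ℤ)) := by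
    show (min (k v) (levelCount G ℓ v (i+1)) : ℝ) * μ * β ^ (-((i:ℕ)+1 : ℕ) : ℤ) ≤ _
    apply mul_le_mul (mul_le_mul_of_nonneg_right (min_le_right _ _) hμ0.le)
      _ (zpow_pos hβ0 _).le (mul_nonneg (Nat.cast_nonneg _) hμ0.le)
    apply zpow_le_zpow_right₀ hβ.le
    push_cast
    omega
  have hAle : A ≤ (levelCountRange G ℓ v 0 i : ℝ) := by
    rw [hA]; exact min_le_right _ _
  have h1 : A * μ * β ^ (-(i : ℤ)) + f (i + 1) ≤ B * μ * β ^ (-(i : ℤ)) := by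
    have := mul_le_mul_of_nonneg_right
      (mul_le_mul_of_nonneg_right hAle hμ0.le) (zpow_pos hβ0 (-(i:ℤ))).le
    have h2 := hfle
    rw [hBval]
    nlinarith [zpow_pos hβ0 (-(i:ℤ))]
  have h3 : T ≤ β * T := le_mul_of_one_le_left hT0 hβ.le
  linarith
end

section
/- Suppose a valid level scheme is non-improvable, in the sense that every vertex v with ℓ(v) ≥ 1 satisfies W_v(ℓ(v) − 1) > c_v (i.e., no vertex can drop its own level by one while keeping its own weight constraint). Then the scheme is (β + 1)-tight: W_v > c_v/(β + 1) for every vertex v with ℓ(v) ≥ 1. -/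
open scoped Classical

/-- A non-improvable valid level scheme (no vertex of positive level can drop its own level by one
while keeping its own weight constraint) is `(β + 1)`-tight:
`W_v > c_v/(β + 1)` for every vertex `v` of level at least `1`. -/
theorem non_improvable_is_tight {V : Type*} [Fintype V] (G : SimpleGraph V)
    (c : V → ℝ) (k : V → ℕ) (β μ : ℝ) (ℓ : V → ℕ)
    (hc : ∀ v, 0 < c v) (hk : ∀ v, 1 ≤ k v) (hβ : 1 < β) (hμ : ∀ v, c v < μ)
    (hvalid : ∀ v, vertexWeight G β μ k ℓ v ≤ c v)
    (hnonimp : ∀ v, 1 ≤ ℓ v → c v < vertexWeight G β μ k (Function.update ℓ v (ℓ v - 1)) v) :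
    ∀ v, 1 ≤ ℓ v → c v / (β + 1) < vertexWeight G β μ k ℓ v := by
  intro v hv
  have hβ0 : (0:ℝ) < β := lt_trans one_pos hβ
  have hβ1 : (0:ℝ) < β + 1 := by linarith
  have hμ0 : 0 < μ := (hc v).trans (hμ v)
  set j := ℓ v with hjdef
  set ℓ' := Function.update ℓ v (j - 1) with hl'
  -- counts unchanged under the update
  have hcount : ∀ i, levelCount G ℓ' v i = levelCount G ℓ v i := by
    intro i
    unfold levelCount
    congr 1
    apply Finset.filter_congr
    intro u _
    by_cases h : G.Adj v u
    · have hne : u ≠ v := fun h' => G.loopless.irrefl v (h' ▸ h)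
      simp [h, hl', Function.update_of_ne hne]
    · simp [h]
  have hrange : ∀ m, levelCountRange G ℓ' v 0 m = levelCountRange G ℓ v 0 m := by
    intro m
    unfold levelCountRange
    congr 1
    apply Finset.filter_congr
    intro u _
    by_cases h : G.Adj v u
    · have hne : u ≠ v := fun h' => G.loopless.irrefl v (h' ▸ h)
      simp [h, hl', Function.update_of_ne hne]
    · simp [h]
  have hlv' : ℓ' v = j - 1 := Function.update_self v (j-1) ℓ
  -- abbreviations
  set f : ℕ → ℝ := fun i => (min (k v) (levelCount G ℓ v i) : ℝ) * μ * β ^ (-(i : ℤ)) with hf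
  have hfnn : ∀ i, 0 ≤ f i := by
    intro i
    apply mul_nonneg (mul_nonneg (by positivity) hμ0.le)
    positivity
  have hzpow : ∀ i : ℕ, β ^ (-(i:ℤ)) = (β⁻¹) ^ i := by
    intro i; rw [zpow_neg, zpow_natCast, inv_pow]
  have hgeo : Summable (fun i : ℕ => ((k v : ℝ) * μ) * (β⁻¹) ^ i) := by
    apply Summable.mul_left
    apply summable_geometric_of_lt_one (by positivity)
    rw [inv_lt_one_iff₀]; right; exact hβ
  have hle : ∀ i, f i ≤ ((k v : ℝ) * μ) * (β⁻¹) ^ i := by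
    intro i
    rw [hf]
    simp only [hzpow i]
    apply mul_le_mul_of_nonneg_right _ (by positivity)
    apply mul_le_mul_of_nonneg_right _ hμ0.le
    exact_mod_cast min_le_left _ _
  have hsumf : Summable f := Summable.of_nonneg_of_le hfnn hle hgeo
  have hsum1 : Summable (fun i => if j < i then f i else 0) :=
    Summable.of_nonneg_of_le (fun i => by split <;> [exact hfnn i; exact le_rfl])
      (fun i => by split <;> [exact le_rfl; exact hfnn i]) hsumf
  have hsum2 : Summable (fun i => if i = j then f i else 0) :=
    Summable.of_nonneg_of_le (fun i => by split <;> [exact hfnn i; exact le_rfl])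
      (fun i => by split <;> [exact le_rfl; exact hfnn i]) hsumf
  -- split the tail of W_v(j-1)
  have hsplit : ∀ i : ℕ, (if j - 1 < i then f i else 0)
      = (if i = j then f i else 0) + (if j < i then f i else 0) := by
    intro i
    rcases lt_trichotomy i j with h | h | h
    · rw [if_neg (by omega), if_neg (by omega), if_neg (by omega)]; ring
    · rw [if_pos (by omega), if_pos h, if_neg (by omega)]; ring
    · rw [if_pos (by omega), if_neg (by omega), if_pos h]; ring
  have htail : (∑' i : ℕ, if j - 1 < i then f i else 0)
      = f j + ∑' i : ℕ, if j < i then f i else 0 := by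
    calc (∑' i : ℕ, if j - 1 < i then f i else 0)
        = ∑' i : ℕ, ((if i = j then f i else 0) + (if j < i then f i else 0)) := by
          exact tsum_congr hsplit
      _ = (∑' i : ℕ, if i = j then f i else 0) + ∑' i : ℕ, (if j < i then f i else 0) :=
          Summable.tsum_add hsum2 hsum1
      _ = f j + ∑' i : ℕ, (if j < i then f i else 0) := by
          congr 1
          have h := tsum_eq_single (L := SummationFilter.unconditional ℕ) (f := fun b : ℕ => if b = j then f b else 0) j
            (fun b hb => if_neg hb)
          simpa using h
  -- rewrite W' = vertexWeight with updated levels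
  set A : ℝ := (min (k v) (levelCountRange G ℓ v 0 j) : ℝ) with hA
  set B : ℝ := (min (k v) (levelCountRange G ℓ v 0 (j-1)) : ℝ) with hB
  set T : ℝ := ∑' i : ℕ, (if j < i then f i else 0) with hT
  have hTnn : 0 ≤ T := tsum_nonneg (fun i => by split <;> [exact hfnn i; exact le_rfl])
  have hW : vertexWeight G β μ k ℓ v = A * μ * β ^ (-(j:ℤ)) + T := rfl
  have hW' : vertexWeight G β μ k ℓ' v
      = B * μ * β ^ (-((j-1:ℕ):ℤ)) + (f j + T) := by
    unfold vertexWeight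
    rw [hlv', hrange]
    congr 1
    rw [← htail]
    apply tsum_congr
    intro i
    rw [hcount i]
  -- key pieces of monotonicity
  have hBA : B ≤ A := by
    rw [hA, hB]
    have : levelCountRange G ℓ v 0 (j-1) ≤ levelCountRange G ℓ v 0 j := by
      apply Finset.card_le_card
      intro u hu
      simp only [Finset.mem_filter] at hu ⊢
      exact ⟨hu.1, hu.2.1, hu.2.2.1, by omega⟩
    exact_mod_cast min_le_min le_rfl this
  have hfA : f j ≤ A * μ * β ^ (-(j:ℤ)) := by
    rw [hf, hA]
    apply mul_le_mul_of_nonneg_right _ (by positivity)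
    apply mul_le_mul_of_nonneg_right _ hμ0.le
    have : levelCount G ℓ v j ≤ levelCountRange G ℓ v 0 j := by
      apply Finset.card_le_card
      intro u hu
      simp only [Finset.mem_filter] at hu ⊢
      exact ⟨hu.1, hu.2.1, by omega, le_of_eq hu.2.2⟩
    exact_mod_cast min_le_min le_rfl this
  have hpow : β ^ (-((j-1:ℕ):ℤ)) = β * β ^ (-(j:ℤ)) := by
    have hj1 : ((j-1:ℕ):ℤ) = (j:ℤ) - 1 := by omega
    rw [hj1, show (-((j:ℤ) - 1)) = 1 + -(j:ℤ) by ring,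
      zpow_add₀ (ne_of_gt hβ0), zpow_one]
  have hAnn : 0 ≤ A := by rw [hA]; positivity
  -- main estimate
  have hkey : vertexWeight G β μ k ℓ' v ≤ (β + 1) * vertexWeight G β μ k ℓ v := by
    rw [hW', hW, hpow]
    have h1 : B * μ * (β * β ^ (-(j:ℤ))) ≤ β * (A * μ * β ^ (-(j:ℤ))) := by
      have := mul_le_mul_of_nonneg_right hBA (le_of_lt (by positivity : (0:ℝ) < μ * β ^ (-(j:ℤ))))
      calc B * μ * (β * β ^ (-(j:ℤ))) = β * (B * (μ * β ^ (-(j:ℤ)))) := by ring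
        _ ≤ β * (A * (μ * β ^ (-(j:ℤ)))) := by
            apply mul_le_mul_of_nonneg_left this hβ0.le
        _ = β * (A * μ * β ^ (-(j:ℤ))) := by ring
    have h2 : 0 ≤ β * T := mul_nonneg hβ0.le hTnn
    have h3 : 0 ≤ A * μ * β ^ (-(j:ℤ)) := by positivity
    nlinarith [hfA]
  have := (hnonimp v hv).trans_le hkey
  rw [div_lt_iff₀ hβ1]
  linarith [this]
end

section
/- Given a valid level scheme on G with a consistent edge assignment δ, define for each vertex v: if |δ(v)| > k_v, set q_v = μ·β^(−ℓ(v)) and l_{ev} = 0 for all edges e ∋ v; otherwise set q_v = μ·Σ_{i : D̂_v(i) > k_v} β^(−i), and for each edge e ∋ v set l_{ev} = 0 if D̂_v(ℓ(e)) > k_v and l_{ev} = μ·β^(−ℓ(e)) otherwise. Also set π_e = μ·β^(−ℓ(e)) for each edge e. Then (q, l, π) is a feasible dual solution: q_v ≥ 0, l_{ev} ≥ 0, π_e ≥ 0, k_v·q_v + Σ_{e ∋ v} l_{ev} ≤ c_v for every vertex v, and q_v + l_{ev} ≥ π_e for every incidence v ∈ e ∈ E. -/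
open scoped Classical

/-- `D̂_v(i)`: the number of edges incident to `v` whose edge level equals `i`. -/
noncomputable def incEdgeCount {V : Type*} [Fintype V] (G : SimpleGraph V)
    (ℓ : V → ℕ) (v : V) (i : ℕ) : ℕ :=
  (Finset.univ.filter fun u => G.Adj v u ∧ max (ℓ u) (ℓ v) = i).card

/-- `|δ(v)|`: the number of edges assigned to `v` by the edge assignment `A`,
where `A u v` means that the edge `{u, v}` is assigned to its endpoint `v`. -/
noncomputable def assignedCount {V : Type*} [Fintype V] (G : SimpleGraph V)
    (A : V → V → Prop) (v : V) : ℕ :=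
  (Finset.univ.filter fun u => G.Adj v u ∧ A u v).card

/-- The dual variable `q_v` constructed from a valid level scheme with edge assignment `A`. -/
noncomputable def qdef {V : Type*} [Fintype V] (G : SimpleGraph V)
    (β μ : ℝ) (k : V → ℕ) (ℓ : V → ℕ) (A : V → V → Prop) (v : V) : ℝ :=
  if k v < assignedCount G A v then μ * β ^ (-(ℓ v : ℤ))
  else μ * ∑' i : ℕ, if k v < incEdgeCount G ℓ v i then β ^ (-(i : ℤ)) else 0

/-- The dual variable `l_{ev}` for the edge `e = {u, v}` at its endpoint `v`, constructed from a
valid level scheme with edge assignment `A`. -/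
noncomputable def ldef {V : Type*} [Fintype V] (G : SimpleGraph V)
    (β μ : ℝ) (k : V → ℕ) (ℓ : V → ℕ) (A : V → V → Prop) (u v : V) : ℝ :=
  if k v < assignedCount G A v then 0
  else if k v < incEdgeCount G ℓ v (max (ℓ u) (ℓ v)) then 0
  else μ * β ^ (-(max (ℓ u) (ℓ v) : ℤ))

lemma geom_summable {β : ℝ} (hβ : 1 < β) : Summable (fun i : ℕ => β ^ (-(i:ℤ))) := by
  have h : (fun i : ℕ => β ^ (-(i:ℤ))) = fun i => (β⁻¹) ^ i := by
    funext i; rw [zpow_neg, zpow_natCast, inv_pow]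
  rw [h]
  exact summable_geometric_of_lt_one (by positivity) (inv_lt_one_of_one_lt₀ hβ)

lemma incEdgeCount_eq_zero_of_lt {V : Type*} [Fintype V] (G : SimpleGraph V)
    (ℓ : V → ℕ) (v : V) {i : ℕ} (h : i < ℓ v) : incEdgeCount G ℓ v i = 0 := by
  unfold incEdgeCount
  rw [Finset.card_eq_zero, Finset.filter_eq_empty_iff]
  rintro u - ⟨-, hm⟩
  have h3 : ℓ v ≤ i := hm ▸ le_max_right (ℓ u) (ℓ v)
  omega

lemma incEdgeCount_eq_zero_of_sup {V : Type*} [Fintype V] (G : SimpleGraph V)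
    (ℓ : V → ℕ) (v : V) {i : ℕ} (h : Finset.univ.sup ℓ < i) : incEdgeCount G ℓ v i = 0 := by
  unfold incEdgeCount
  rw [Finset.card_eq_zero, Finset.filter_eq_empty_iff]
  rintro u - ⟨-, hm⟩
  have h1 : ℓ u ≤ Finset.univ.sup ℓ := Finset.le_sup (Finset.mem_univ u)
  have h2 : ℓ v ≤ Finset.univ.sup ℓ := Finset.le_sup (Finset.mem_univ v)
  have h3 : i ≤ Finset.univ.sup ℓ := hm ▸ max_le h1 h2
  omega

lemma incEdgeCount_self {V : Type*} [Fintype V] (G : SimpleGraph V)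
    (ℓ : V → ℕ) (v : V) : incEdgeCount G ℓ v (ℓ v) = levelCountRange G ℓ v 0 (ℓ v) := by
  unfold incEdgeCount levelCountRange
  congr 1
  apply Finset.filter_congr
  intro u _
  constructor
  · rintro ⟨ha, hm⟩; exact ⟨ha, Nat.zero_le _, max_eq_right_iff.mp hm⟩
  · rintro ⟨ha, -, hle⟩; exact ⟨ha, max_eq_right hle⟩

lemma incEdgeCount_of_gt {V : Type*} [Fintype V] (G : SimpleGraph V)
    (ℓ : V → ℕ) (v : V) {i : ℕ} (h : ℓ v < i) : incEdgeCount G ℓ v i = levelCount G ℓ v i := by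
  unfold incEdgeCount levelCount
  congr 1
  apply Finset.filter_congr
  intro u _
  constructor
  · rintro ⟨ha, hm⟩
    refine ⟨ha, ?_⟩
    rcases max_cases (ℓ u) (ℓ v) with ⟨h1, h2⟩ | ⟨h1, h2⟩ <;> omega
  · rintro ⟨ha, he⟩
    exact ⟨ha, by rw [he]; exact max_eq_left (by omega)⟩
/-- Given a valid level scheme with a consistent edge assignment, the prescribed
`(q, l, π)` (with `π_e = μ·β^(−ℓ(e))`) is a feasible dual solution. -/
theorem dual_feasibility {V : Type*} [Fintype V] (G : SimpleGraph V)
    (c : V → ℝ) (k : V → ℕ) (β μ : ℝ) (ℓ : V → ℕ) (A : V → V → Prop)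
    (hc : ∀ v, 0 < c v) (hk : ∀ v, 1 ≤ k v) (hβ : 1 < β) (hμ : ∀ v, c v < μ)
    -- the scheme is valid
    (hvalid : ∀ v, vertexWeight G β μ k ℓ v ≤ c v)
    -- `A` assigns each edge to exactly one of its endpoints ...
    (hA : ∀ u v, G.Adj u v → (A u v ∧ ¬ A v u) ∨ (A v u ∧ ¬ A u v))
    -- ... whose level equals the edge level
    (hAlevel : ∀ u v, G.Adj u v → A u v → ℓ v = max (ℓ u) (ℓ v)) :
    (∀ v, 0 ≤ qdef G β μ k ℓ A v) ∧
    (∀ u v, G.Adj u v → 0 ≤ ldef G β μ k ℓ A u v) ∧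
    (∀ u v, G.Adj u v → 0 ≤ μ * β ^ (-(max (ℓ u) (ℓ v) : ℤ))) ∧
    (∀ v, (k v : ℝ) * qdef G β μ k ℓ A v
        + ∑ u ∈ Finset.univ.filter (fun u => G.Adj v u), ldef G β μ k ℓ A u v ≤ c v) ∧
    (∀ u v, G.Adj u v →
        μ * β ^ (-(max (ℓ u) (ℓ v) : ℤ)) ≤ qdef G β μ k ℓ A v + ldef G β μ k ℓ A u v) := by
  have hβ0 : (0:ℝ) < β := lt_trans one_pos hβ
  have hgeom : Summable (fun i : ℕ => β ^ (-(i:ℤ))) := geom_summable hβ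
  have hpow : ∀ i : ℕ, (0:ℝ) ≤ β ^ (-(i:ℤ)) := fun i => le_of_lt (zpow_pos hβ0 _)
  have hμpos : ∀ v : V, 0 < μ := fun v => lt_trans (hc v) (hμ v)
  refine ⟨?_, ?_, ?_, ?_, ?_⟩
  · -- q ≥ 0
    intro v
    unfold qdef
    split
    · exact mul_nonneg (hμpos v).le (hpow _)
    · exact mul_nonneg (hμpos v).le
        (tsum_nonneg fun i => by split; exacts [hpow i, le_refl 0])
  · -- l ≥ 0
    intro u v _
    unfold ldef
    split
    · exact le_refl 0
    · split
      · exact le_refl 0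
      · rw [← Nat.cast_max]
        exact mul_nonneg (hμpos v).le (hpow _)
  · -- π ≥ 0
    intro u v _
    rw [← Nat.cast_max]
    exact mul_nonneg (hμpos v).le (hpow _)
  · -- budget constraint
    intro v
    have hμp : 0 < μ := hμpos v
    by_cases h1 : k v < assignedCount G A v
    · -- case |δ(v)| > k_v
      have hLzero : ∑ u ∈ Finset.univ.filter (fun u => G.Adj v u), ldef G β μ k ℓ A u v = 0 :=
        Finset.sum_eq_zero fun u _ => by rw [ldef, if_pos h1]
      rw [hLzero, qdef, if_pos h1]
      have hsub : assignedCount G A v ≤ levelCountRange G ℓ v 0 (ℓ v) := by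
        apply Finset.card_le_card
        intro u hu
        simp only [Finset.mem_filter, Finset.mem_univ, true_and] at hu ⊢
        obtain ⟨ha, hAuv⟩ := hu
        exact ⟨ha, Nat.zero_le _, max_eq_right_iff.mp (hAlevel u v ha.symm hAuv).symm⟩
      have hmin : min ((k v : ℝ)) ((levelCountRange G ℓ v 0 (ℓ v) : ℝ)) = (k v : ℝ) :=
        min_eq_left (by exact_mod_cast le_trans h1.le hsub)
      have hval := hvalid v
      rw [vertexWeight, hmin] at hval
      have htail : 0 ≤ ∑' i : ℕ, if ℓ v < i then
          (min (k v) (levelCount G ℓ v i) : ℝ) * μ * β ^ (-(i : ℤ)) else 0 :=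
        tsum_nonneg fun i => by
          split
          · exact mul_nonneg (mul_nonneg (le_min (Nat.cast_nonneg _) (Nat.cast_nonneg _)) hμp.le) (hpow i)
          · exact le_refl 0
      calc (k v : ℝ) * (μ * β ^ (-(ℓ v : ℤ))) + 0
          = (k v : ℝ) * μ * β ^ (-(ℓ v : ℤ)) := by ring
        _ ≤ c v := by linarith
    · -- case |δ(v)| ≤ k_v
      have hKμ : (0:ℝ) ≤ (k v : ℝ) * μ := mul_nonneg (Nat.cast_nonneg _) hμp.le
      have hbound : Summable (fun i : ℕ => (k v : ℝ) * μ * β ^ (-(i:ℤ))) := by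
        simpa [mul_assoc] using hgeom.mul_left ((k v : ℝ) * μ)
      have hsum1 : Summable (fun i : ℕ =>
          if k v < incEdgeCount G ℓ v i then (k v : ℝ) * μ * β ^ (-(i:ℤ)) else 0) := by
        apply Summable.of_nonneg_of_le _ _ hbound
        · intro i; split
          · exact mul_nonneg hKμ (hpow i)
          · exact le_refl 0
        · intro i; split
          · exact le_refl _
          · exact mul_nonneg hKμ (hpow i)
      have hsum2 : Summable (fun j : ℕ =>
          if k v < incEdgeCount G ℓ v j then 0
          else (incEdgeCount G ℓ v j : ℝ) * μ * β ^ (-(j:ℤ))) := by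
        apply Summable.of_nonneg_of_le _ _ hbound
        · intro i; split
          · exact le_refl 0
          · exact mul_nonneg (mul_nonneg (Nat.cast_nonneg _) hμp.le) (hpow i)
        · intro i; split
          · exact mul_nonneg hKμ (hpow i)
          · next h =>
              push_neg at h
              exact mul_le_mul_of_nonneg_right
                (mul_le_mul_of_nonneg_right (by exact_mod_cast h) hμp.le) (hpow i)
      have hsumf : Summable (fun j : ℕ =>
          (min (k v) (incEdgeCount G ℓ v j) : ℝ) * μ * β ^ (-(j:ℤ))) := by
        apply Summable.of_nonneg_of_le _ _ hbound
        · intro i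
          exact mul_nonneg (mul_nonneg (le_min (Nat.cast_nonneg _) (Nat.cast_nonneg _)) hμp.le) (hpow i)
        · intro i
          exact mul_le_mul_of_nonneg_right
            (mul_le_mul_of_nonneg_right (min_le_left _ _) hμp.le) (hpow i)
      -- the q-part as a tsum
      have hq : (k v : ℝ) * qdef G β μ k ℓ A v = ∑' i : ℕ,
          (if k v < incEdgeCount G ℓ v i then (k v : ℝ) * μ * β ^ (-(i:ℤ)) else 0) := by
        rw [qdef, if_neg h1, ← tsum_mul_left, ← tsum_mul_left]
        exact tsum_congr fun i => by split <;> ring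
      -- the l-part as a tsum
      set N := Finset.univ.sup ℓ with hN
      have hL : ∑ u ∈ Finset.univ.filter (fun u => G.Adj v u), ldef G β μ k ℓ A u v
          = ∑' j : ℕ, (if k v < incEdgeCount G ℓ v j then 0
            else (incEdgeCount G ℓ v j : ℝ) * μ * β ^ (-(j:ℤ))) := by
        have hmaps : ∀ u ∈ Finset.univ.filter (fun u => G.Adj v u),
            max (ℓ u) (ℓ v) ∈ Finset.range (N + 1) := by
          intro u _
          rw [Finset.mem_range, Nat.lt_succ_iff]
          exact max_le (Finset.le_sup (Finset.mem_univ u)) (Finset.le_sup (Finset.mem_univ v))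
        rw [← Finset.sum_fiberwise_of_maps_to hmaps (fun u => ldef G β μ k ℓ A u v)]
        have hvanish : ∀ j ∉ Finset.range (N + 1),
            (if k v < incEdgeCount G ℓ v j then 0
              else (incEdgeCount G ℓ v j : ℝ) * μ * β ^ (-(j:ℤ))) = 0 := by
          intro j hj
          rw [Finset.mem_range, Nat.lt_succ_iff] at hj
          have h0 : incEdgeCount G ℓ v j = 0 :=
            incEdgeCount_eq_zero_of_sup G ℓ v (by omega)
          simp [h0, hk v]
        rw [tsum_eq_sum hvanish]
        apply Finset.sum_congr rfl
        intro j _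
        have hterm : ∀ u ∈ (Finset.univ.filter fun u => G.Adj v u).filter
            (fun u => max (ℓ u) (ℓ v) = j),
            ldef G β μ k ℓ A u v =
              (if k v < incEdgeCount G ℓ v j then 0 else μ * β ^ (-(j:ℤ))) := by
          intro u hu
          rw [Finset.mem_filter] at hu
          rw [ldef, if_neg h1, ← Nat.cast_max, hu.2]
        rw [Finset.sum_congr rfl hterm, Finset.sum_const]
        have hcard : ((Finset.univ.filter fun u => G.Adj v u).filter
            (fun u => max (ℓ u) (ℓ v) = j)).card = incEdgeCount G ℓ v j := by
          rw [Finset.filter_filter]; rfl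
        rw [hcard]
        split <;> simp [nsmul_eq_mul] <;> ring
      -- combine
      have htot : (k v : ℝ) * qdef G β μ k ℓ A v
          + ∑ u ∈ Finset.univ.filter (fun u => G.Adj v u), ldef G β μ k ℓ A u v
          = ∑' j : ℕ, (min (k v) (incEdgeCount G ℓ v j) : ℝ) * μ * β ^ (-(j:ℤ)) := by
        rw [hq, hL, ← Summable.tsum_add hsum1 hsum2]
        apply tsum_congr
        intro j
        by_cases h : k v < incEdgeCount G ℓ v j
        · rw [if_pos h, if_pos h, add_zero,
            min_eq_left (by exact_mod_cast h.le : ((k v : ℝ)) ≤ (incEdgeCount G ℓ v j : ℝ))]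
        · rw [if_neg h, if_neg h, zero_add,
            min_eq_right (by exact_mod_cast not_lt.mp h :
              ((incEdgeCount G ℓ v j : ℝ)) ≤ ((k v : ℝ)))]
      -- equal to the vertex weight
      have hW : (∑' j : ℕ, (min (k v) (incEdgeCount G ℓ v j) : ℝ) * μ * β ^ (-(j:ℤ)))
          = vertexWeight G β μ k ℓ v := by
        rw [vertexWeight, Summable.tsum_eq_add_tsum_ite hsumf (ℓ v)]
        congr 1
        · rw [incEdgeCount_self]
        · apply tsum_congr
          intro j
          by_cases hje : j = ℓ v
          · simp [hje]
          · rw [if_neg hje]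
            by_cases hjl : ℓ v < j
            · rw [if_pos hjl, incEdgeCount_of_gt G ℓ v hjl]
            · rw [if_neg hjl]
              have h0 : incEdgeCount G ℓ v j = 0 :=
                incEdgeCount_eq_zero_of_lt G ℓ v (by omega)
              simp [h0]
      rw [htot, hW]
      exact hvalid v
  · -- complementary slackness-type inequality
    intro u v hadj
    rw [← Nat.cast_max]
    by_cases h1 : k v < assignedCount G A v
    · rw [qdef, ldef, if_pos h1, if_pos h1, add_zero]
      apply mul_le_mul_of_nonneg_left _ (hμpos v).le
      apply zpow_le_zpow_right₀ hβ.le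
      exact neg_le_neg (by exact_mod_cast le_max_right (ℓ u) (ℓ v))
    · rw [qdef, ldef, if_neg h1, if_neg h1, ← Nat.cast_max]
      by_cases h2 : k v < incEdgeCount G ℓ v (max (ℓ u) (ℓ v))
      · rw [if_pos h2, add_zero]
        apply mul_le_mul_of_nonneg_left _ (hμpos v).le
        have hs : Summable (fun i : ℕ =>
            if k v < incEdgeCount G ℓ v i then β ^ (-(i:ℤ)) else 0) := by
          apply Summable.of_nonneg_of_le _ _ hgeom
          · intro i; split; exacts [hpow i, le_refl 0]
          · intro i; split; exacts [le_refl _, hpow i]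
        have h3 : β ^ (-((max (ℓ u) (ℓ v) : ℕ) : ℤ)) =
            (if k v < incEdgeCount G ℓ v (max (ℓ u) (ℓ v))
              then β ^ (-((max (ℓ u) (ℓ v) : ℕ) : ℤ)) else 0) := (if_pos h2).symm
        rw [h3]
        exact Summable.le_tsum hs _ fun j _ => by split; exacts [hpow j, le_refl 0]
      · rw [if_neg h2]
        have hq0 : 0 ≤ μ * ∑' i : ℕ,
            (if k v < incEdgeCount G ℓ v i then β ^ (-(i:ℤ)) else 0) :=
          mul_nonneg (hμpos v).le (tsum_nonneg fun i => by split; exacts [hpow i, le_refl 0])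
        linarith
end

section
/- Let ε ≥ 1 and let an ε-tight valid level scheme on G with consistent edge assignment δ be given. Then Σ_{v : δ(v) ≠ ∅} ⌈|δ(v)|/k_v⌉·c_v ≤ ε·(2β/(β − 1) + 1)·Σ_{e ∈ E} μ·β^(−ℓ(e)). -/
open scoped Classical

/-- The level of an edge: the maximum of the levels of its endpoints. -/
noncomputable def edgeLevel {V : Type*} (ℓ : V → ℕ) : Sym2 V → ℕ :=
  Sym2.lift ⟨fun a b => max (ℓ a) (ℓ b), fun a b => max_comm _ _⟩

-- helper: tsum is a finite sum
lemma weight_eq_finsum {V : Type*} [Fintype V] (G : SimpleGraph V)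
    (β μ : ℝ) (k : V → ℕ) (ℓ : V → ℕ) (v : V) :
    vertexWeight G β μ k ℓ v
      = (min (k v) (levelCountRange G ℓ v 0 (ℓ v)) : ℝ) * μ * β ^ (-(ℓ v : ℤ))
        + ∑ i ∈ Finset.univ.image ℓ,
            (if ℓ v < i then (min (k v) (levelCount G ℓ v i) : ℝ) * μ * β ^ (-(i : ℤ)) else 0) := by
  unfold vertexWeight
  congr 1
  refine tsum_eq_sum ?_
  intro i hi
  by_cases h : ℓ v < i
  · rw [if_pos h]
    have hD : levelCount G ℓ v i = 0 := by
      unfold levelCount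
      rw [Finset.card_eq_zero, Finset.filter_eq_empty_iff]
      intro u _
      rintro ⟨-, hu⟩
      exact hi (Finset.mem_image.mpr ⟨u, Finset.mem_univ u, hu⟩)
    rw [hD]
    simp
  · rw [if_neg h]


lemma ceil_mul_min_le (n k m : ℕ) (hk : 1 ≤ k) :
    (⌈(n : ℝ) / (k : ℝ)⌉₊ : ℝ) * min (k : ℝ) (m : ℝ) ≤ (n : ℝ) + min (k : ℝ) (m : ℝ) := by
  have hk0 : (0:ℝ) < k := by exact_mod_cast hk
  have hC : (⌈(n : ℝ) / (k : ℝ)⌉₊ : ℝ) < (n : ℝ) / (k : ℝ) + 1 :=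
    Nat.ceil_lt_add_one (by positivity)
  have hmin1 : min (k:ℝ) (m:ℝ) ≤ (k:ℝ) := min_le_left _ _
  have hmin0 : (0:ℝ) ≤ min (k:ℝ) (m:ℝ) := le_min (by positivity) (by positivity)
  have hq : (n:ℝ)/(k:ℝ) * (k:ℝ) = (n:ℝ) := div_mul_cancel₀ _ (ne_of_gt hk0)
  nlinarith [mul_le_mul_of_nonneg_right (le_of_lt hC) hmin0,
    mul_le_mul_of_nonneg_left hmin1 (div_nonneg (Nat.cast_nonneg n) (le_of_lt hk0))]

lemma geom_tail_sum {β : ℝ} (hβ : 1 < β) (L : ℕ) (S : Finset ℕ) (hS : ∀ i ∈ S, L < i) :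
    ∑ i ∈ S, (β⁻¹) ^ i ≤ β ^ (-(L : ℤ)) * (1 / (β - 1)) := by
  have hβ0 : (0:ℝ) < β := lt_trans one_pos hβ
  have hr0 : (0:ℝ) < β⁻¹ := inv_pos.mpr hβ0
  have hr1 : β⁻¹ < 1 := inv_lt_one_of_one_lt₀ hβ
  have hb1 : (0:ℝ) < β - 1 := by linarith
  have hzr : β ^ (-(L:ℤ)) = (β⁻¹) ^ L := by
    rw [zpow_neg, zpow_natCast, inv_pow]
  rcases S.eq_empty_or_nonempty with rfl | hne
  · rw [Finset.sum_empty]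
    positivity
  · have hmn : L + 1 ≤ S.sup id + 1 := by
      obtain ⟨i, hi⟩ := hne
      have := hS i hi
      have h2 : i ≤ S.sup id := Finset.le_sup (f := id) hi
      omega
    have hsub : S ⊆ Finset.Ico (L+1) (S.sup id + 1) := by
      intro i hi
      simp only [Finset.mem_Ico]
      exact ⟨hS i hi, Nat.lt_succ_of_le (Finset.le_sup (f := id) hi)⟩
    calc ∑ i ∈ S, (β⁻¹)^i ≤ ∑ i ∈ Finset.Ico (L+1) (S.sup id + 1), (β⁻¹)^i :=
          Finset.sum_le_sum_of_subset_of_nonneg hsub (fun i _ _ => by positivity)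
      _ = ((β⁻¹)^(S.sup id + 1) - (β⁻¹)^(L+1)) / (β⁻¹ - 1) := geom_sum_Ico (ne_of_lt hr1) hmn
      _ ≤ β ^ (-(L:ℤ)) * (1/(β-1)) := by
          rw [hzr, div_le_iff_of_neg (by linarith : β⁻¹ - 1 < 0)]
          have hN : (0:ℝ) ≤ (β⁻¹)^(S.sup id + 1) := by positivity
          have hL : (0:ℝ) ≤ (β⁻¹)^L := by positivity
          have hiv : β⁻¹ * β = 1 := inv_mul_cancel₀ (ne_of_gt hβ0)
          have hps : (β⁻¹)^(L+1) = (β⁻¹)^L * β⁻¹ := pow_succ _ _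
          have key : (β⁻¹)^L * (1/(β-1)) * (β⁻¹ - 1) = -((β⁻¹)^L * β⁻¹) := by
            field_simp
            ring
          nlinarith [hN]


section
variable {V : Type*} [Fintype V] (G : SimpleGraph V) (β μ : ℝ) (k ℓ : V → ℕ) (A : V → V → Prop)

lemma core_bound (hβ : 1 < β) (hμ0 : 0 < μ) (hkk : ∀ v, 1 ≤ k v) (v : V) :
    (⌈(assignedCount G A v : ℝ) / (k v : ℝ)⌉₊ : ℝ) * vertexWeight G β μ k ℓ v
      ≤ (assignedCount G A v : ℝ) * (β / (β - 1)) * (μ * β ^ (-(ℓ v : ℤ)))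
        + ∑ u ∈ Finset.univ.filter (fun u => G.Adj v u), μ * β ^ (-(max (ℓ u) (ℓ v) : ℤ)) := by
  have hβ0 : (0:ℝ) < β := lt_trans one_pos hβ
  have hb1 : (0:ℝ) < β - 1 := by linarith
  set n := assignedCount G A v with hn
  set C : ℝ := (⌈(n : ℝ) / (k v : ℝ)⌉₊ : ℝ) with hCdef
  have hC0 : 0 ≤ C := Nat.cast_nonneg _
  set T : Finset ℕ := Finset.univ.image ℓ with hT
  set T' : Finset ℕ := T.filter (fun i => ℓ v < i) with hT'
  -- rewrite weight as finite sum
  rw [weight_eq_finsum]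
  rw [mul_add, Finset.mul_sum]
  -- bound the head term
  have hhead : C * ((min (k v) (levelCountRange G ℓ v 0 (ℓ v)) : ℝ) * μ * β ^ (-(ℓ v : ℤ)))
      ≤ ((n : ℝ) + (levelCountRange G ℓ v 0 (ℓ v) : ℝ)) * (μ * β ^ (-(ℓ v : ℤ))) := by
    have h1 : C * (min (k v) (levelCountRange G ℓ v 0 (ℓ v)) : ℝ)
        ≤ (n : ℝ) + (levelCountRange G ℓ v 0 (ℓ v) : ℝ) := by
      have := ceil_mul_min_le n (k v) (levelCountRange G ℓ v 0 (ℓ v)) (hkk v)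
      push_cast
      push_cast at this
      nlinarith [min_le_right ((k v : ℝ)) ((levelCountRange G ℓ v 0 (ℓ v) : ℝ))]
    have hpos : (0:ℝ) ≤ μ * β ^ (-(ℓ v : ℤ)) := by positivity
    calc C * ((min (k v) (levelCountRange G ℓ v 0 (ℓ v)) : ℝ) * μ * β ^ (-(ℓ v : ℤ)))
        = (C * (min (k v) (levelCountRange G ℓ v 0 (ℓ v)) : ℝ)) * (μ * β ^ (-(ℓ v : ℤ))) := by ring
      _ ≤ _ := mul_le_mul_of_nonneg_right h1 hpos
  -- bound each tail term
  have hterm : ∀ i ∈ T, C * (if ℓ v < i then (min (k v) (levelCount G ℓ v i) : ℝ) * μ * β ^ (-(i : ℤ)) else 0)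
      ≤ (if ℓ v < i then ((n : ℝ) + (levelCount G ℓ v i : ℝ)) * (μ * β ^ (-(i : ℤ))) else 0) := by
    intro i _
    by_cases h : ℓ v < i
    · rw [if_pos h, if_pos h]
      have h1 : C * (min (k v) (levelCount G ℓ v i) : ℝ)
          ≤ (n : ℝ) + (levelCount G ℓ v i : ℝ) := by
        have := ceil_mul_min_le n (k v) (levelCount G ℓ v i) (hkk v)
        push_cast
        push_cast at this
        nlinarith [min_le_right ((k v : ℝ)) ((levelCount G ℓ v i : ℝ))]
      have hpos : (0:ℝ) ≤ μ * β ^ (-(i : ℤ)) := by positivity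
      calc C * ((min (k v) (levelCount G ℓ v i) : ℝ) * μ * β ^ (-(i : ℤ)))
          = (C * (min (k v) (levelCount G ℓ v i) : ℝ)) * (μ * β ^ (-(i : ℤ))) := by ring
        _ ≤ _ := mul_le_mul_of_nonneg_right h1 hpos
    · rw [if_neg h, if_neg h, mul_zero]
  refine le_trans (add_le_add hhead (Finset.sum_le_sum hterm)) ?_
  -- now pure rearrangement and geometric bound
  have hsplit : ∑ i ∈ T, (if ℓ v < i then ((n : ℝ) + (levelCount G ℓ v i : ℝ)) * (μ * β ^ (-(i : ℤ))) else 0)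
      = ∑ i ∈ T', ((n : ℝ) + (levelCount G ℓ v i : ℝ)) * (μ * β ^ (-(i : ℤ))) := by
    rw [hT', Finset.sum_filter]
  rw [hsplit]
  have hexpand : ∑ i ∈ T', ((n : ℝ) + (levelCount G ℓ v i : ℝ)) * (μ * β ^ (-(i : ℤ)))
      = (n : ℝ) * ∑ i ∈ T', μ * β ^ (-(i : ℤ))
        + ∑ i ∈ T', (levelCount G ℓ v i : ℝ) * (μ * β ^ (-(i : ℤ))) := by
    rw [Finset.mul_sum, ← Finset.sum_add_distrib]
    exact Finset.sum_congr rfl (fun i _ => by ring)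
  rw [hexpand]
  -- geometric bound for the n-part
  have hgeo : ∑ i ∈ T', μ * β ^ (-(i : ℤ)) ≤ μ * (β ^ (-(ℓ v : ℤ)) * (1 / (β - 1))) := by
    have : ∑ i ∈ T', μ * β ^ (-(i : ℤ)) = μ * ∑ i ∈ T', (β⁻¹) ^ i := by
      rw [Finset.mul_sum]
      refine Finset.sum_congr rfl (fun i _ => ?_)
      rw [zpow_neg, zpow_natCast, inv_pow]
    rw [this]
    refine mul_le_mul_of_nonneg_left ?_ (le_of_lt hμ0)
    exact geom_tail_sum hβ (ℓ v) T' (fun i hi => (Finset.mem_filter.mp hi).2)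
  -- the pair part identity
  have hpair : (levelCountRange G ℓ v 0 (ℓ v) : ℝ) * (μ * β ^ (-(ℓ v : ℤ)))
        + ∑ i ∈ T', (levelCount G ℓ v i : ℝ) * (μ * β ^ (-(i : ℤ)))
      = ∑ u ∈ Finset.univ.filter (fun u => G.Adj v u), μ * β ^ (-(max (ℓ u) (ℓ v) : ℤ)) := by
    rw [← Finset.sum_filter_add_sum_filter_not (Finset.univ.filter fun u => G.Adj v u)
        (fun u => ℓ u ≤ ℓ v) (fun u => μ * β ^ (-(max (ℓ u) (ℓ v) : ℤ)))]
    congr 1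
    · have hc : ∀ u ∈ (Finset.univ.filter fun u => G.Adj v u).filter (fun u => ℓ u ≤ ℓ v),
          μ * β ^ (-(max (ℓ u) (ℓ v) : ℤ)) = μ * β ^ (-(ℓ v : ℤ)) := by
        intro u hu
        have h2 : ((ℓ u : ℤ) ⊔ (ℓ v : ℤ)) = (ℓ v : ℤ) :=
          max_eq_right (by exact_mod_cast (Finset.mem_filter.mp hu).2)
        rw [h2]
      rw [Finset.sum_congr rfl hc, Finset.sum_const, nsmul_eq_mul]
      have hcard : ((Finset.univ.filter fun u => G.Adj v u).filter (fun u => ℓ u ≤ ℓ v)).card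
          = levelCountRange G ℓ v 0 (ℓ v) := by
        unfold levelCountRange
        apply congrArg Finset.card
        rw [Finset.filter_filter]
        ext u
        simp [Nat.zero_le]
      rw [hcard]
    · have hmaps : ∀ u ∈ (Finset.univ.filter fun u => G.Adj v u).filter (fun u => ¬ ℓ u ≤ ℓ v),
          ℓ u ∈ T' := by
        intro u hu
        rw [hT', Finset.mem_filter]
        exact ⟨Finset.mem_image_of_mem ℓ (Finset.mem_univ u),
          not_le.mp (Finset.mem_filter.mp hu).2⟩
      rw [← Finset.sum_fiberwise_of_maps_to hmaps (fun u => μ * β ^ (-(max (ℓ u) (ℓ v) : ℤ)))]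
      refine Finset.sum_congr rfl (fun i hi => ?_)
      have hvi : ℓ v < i := (Finset.mem_filter.mp hi).2
      have hconst : ∀ u ∈ ((Finset.univ.filter fun u => G.Adj v u).filter
            (fun u => ¬ ℓ u ≤ ℓ v)).filter (fun u => ℓ u = i),
          μ * β ^ (-(max (ℓ u) (ℓ v) : ℤ)) = μ * β ^ (-(i : ℤ)) := by
        intro u hu
        have h1 : ℓ u = i := (Finset.mem_filter.mp hu).2
        have h2 : ((ℓ u : ℤ) ⊔ (ℓ v : ℤ)) = (i : ℤ) := by
          rw [h1]
          exact max_eq_left (by exact_mod_cast le_of_lt hvi)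
        rw [h2]
      rw [Finset.sum_congr rfl hconst, Finset.sum_const, nsmul_eq_mul]
      have hcard : (((Finset.univ.filter fun u => G.Adj v u).filter
            (fun u => ¬ ℓ u ≤ ℓ v)).filter (fun u => ℓ u = i)).card
          = levelCount G ℓ v i := by
        unfold levelCount
        apply congrArg Finset.card
        rw [Finset.filter_filter, Finset.filter_filter]
        ext u
        simp only [Finset.mem_filter, Finset.mem_univ, true_and]
        constructor
        · rintro ⟨h1, _, h3⟩; exact ⟨h1, h3⟩
        · rintro ⟨h1, h3⟩; exact ⟨h1, by omega, h3⟩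
      rw [hcard]
  rw [← hpair]
  have hgeo' : (n : ℝ) * ∑ i ∈ T', μ * β ^ (-(i : ℤ))
      ≤ (n : ℝ) * (μ * (β ^ (-(ℓ v : ℤ)) * (1 / (β - 1)))) :=
    mul_le_mul_of_nonneg_left hgeo (Nat.cast_nonneg n)
  have hkey : (n : ℝ) * (μ * β ^ (-(ℓ v : ℤ)))
        + (n : ℝ) * (μ * (β ^ (-(ℓ v : ℤ)) * (1 / (β - 1))))
      = (n : ℝ) * (β / (β - 1)) * (μ * β ^ (-(ℓ v : ℤ))) := by
    field_simp
    ring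
  nlinarith [hgeo', hkey]
end


set_option maxHeartbeats 1000000 in
/-- Given an `ε`-tight valid level scheme with consistent edge assignment `δ`,
`Σ_{v : δ(v) ≠ ∅} ⌈|δ(v)|/k_v⌉·c_v ≤ ε·(2β/(β − 1) + 1)·Σ_{e ∈ E} μ·β^(−ℓ(e))`. -/
theorem tight_scheme_cost_bound {V : Type*} [Fintype V] (G : SimpleGraph V)
    (c : V → ℝ) (k : V → ℕ) (β μ ε : ℝ) (ℓ : V → ℕ) (A : V → V → Prop)
    (hc : ∀ v, 0 < c v) (hk : ∀ v, 1 ≤ k v) (hβ : 1 < β) (hμ : ∀ v, c v < μ) (hε : 1 ≤ ε)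
    -- `A` assigns each edge to exactly one of its endpoints ...
    (hA : ∀ u v, G.Adj u v → (A u v ∧ ¬ A v u) ∨ (A v u ∧ ¬ A u v))
    -- ... whose level equals the edge level
    (hAlevel : ∀ u v, G.Adj u v → A u v → ℓ v = max (ℓ u) (ℓ v))
    -- the scheme is valid
    (hvalid : ∀ v, vertexWeight G β μ k ℓ v ≤ c v)
    -- and `ε`-tight
    (htight : ∀ v, 0 < assignedCount G A v → c v / ε < vertexWeight G β μ k ℓ v) :
    ∑ v ∈ Finset.univ.filter (fun v => 0 < assignedCount G A v),
        (⌈(assignedCount G A v : ℝ) / (k v : ℝ)⌉₊ : ℝ) * c v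
      ≤ ε * (2 * β / (β - 1) + 1) * ∑ e ∈ G.edgeFinset, μ * β ^ (-(edgeLevel ℓ e : ℤ)) := by
  rcases isEmpty_or_nonempty V with hV | hV
  · rw [Finset.univ_eq_empty, Finset.filter_empty, Finset.sum_empty]
    have h2 : G.edgeFinset = ∅ := by
      rw [Finset.eq_empty_iff_forall_notMem]
      intro e he
      induction e using Sym2.ind with
      | _ a b => exact (IsEmpty.false a).elim
    rw [h2, Finset.sum_empty, mul_zero]
  obtain ⟨v0⟩ := hV
  have hμ0 : (0:ℝ) < μ := lt_trans (hc v0) (hμ v0)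
  have hβ0 : (0:ℝ) < β := lt_trans one_pos hβ
  have hb1 : (0:ℝ) < β - 1 := by linarith
  have hε0 : (0:ℝ) < ε := lt_of_lt_of_le one_pos hε
  set w : V → V → ℝ := fun u v => μ * β ^ (-(max (ℓ u) (ℓ v) : ℤ)) with hw
  have hw0 : ∀ u v, 0 ≤ w u v := fun u v => by
    rw [hw]; positivity
  set Q : Finset (V × V) := Finset.univ.filter (fun p => G.Adj p.2 p.1 ∧ A p.1 p.2) with hQ
  set SQ : ℝ := ∑ p ∈ Q, w p.1 p.2 with hSQ
  have hSQ0 : 0 ≤ SQ := Finset.sum_nonneg fun p _ => hw0 _ _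
  set bound : V → ℝ := fun v => (assignedCount G A v : ℝ) * (β / (β - 1)) * (μ * β ^ (-(ℓ v : ℤ)))
    + ∑ u ∈ Finset.univ.filter (fun u => G.Adj v u), w u v with hbound
  -- per-vertex bound
  have hvert : ∀ v ∈ Finset.univ.filter (fun v => 0 < assignedCount G A v),
      (⌈(assignedCount G A v : ℝ) / (k v : ℝ)⌉₊ : ℝ) * c v ≤ ε * bound v := by
    intro v hv
    have hnv : 0 < assignedCount G A v := (Finset.mem_filter.mp hv).2
    have hcw : c v ≤ ε * vertexWeight G β μ k ℓ v := by
      have h := htight v hnv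
      rw [div_lt_iff₀ hε0] at h
      nlinarith [h]
    calc (⌈(assignedCount G A v : ℝ) / (k v : ℝ)⌉₊ : ℝ) * c v
        ≤ (⌈(assignedCount G A v : ℝ) / (k v : ℝ)⌉₊ : ℝ) * (ε * vertexWeight G β μ k ℓ v) :=
          mul_le_mul_of_nonneg_left hcw (Nat.cast_nonneg _)
      _ = ε * ((⌈(assignedCount G A v : ℝ) / (k v : ℝ)⌉₊ : ℝ) * vertexWeight G β μ k ℓ v) := by
          ring
      _ ≤ ε * bound v :=
          mul_le_mul_of_nonneg_left (core_bound G β μ k ℓ A hβ hμ0 hk v) (le_of_lt hε0)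
  have hbound0 : ∀ v, 0 ≤ bound v := by
    intro v
    rw [hbound]
    have h1 : (0:ℝ) ≤ (assignedCount G A v : ℝ) * (β / (β - 1)) * (μ * β ^ (-(ℓ v : ℤ))) := by
      positivity
    exact add_nonneg h1 (Finset.sum_nonneg fun u _ => hw0 _ _)
  have hstep1 : ∑ v ∈ Finset.univ.filter (fun v => 0 < assignedCount G A v),
      (⌈(assignedCount G A v : ℝ) / (k v : ℝ)⌉₊ : ℝ) * c v ≤ ε * ∑ v : V, bound v := by
    calc ∑ v ∈ Finset.univ.filter (fun v => 0 < assignedCount G A v),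
        (⌈(assignedCount G A v : ℝ) / (k v : ℝ)⌉₊ : ℝ) * c v
        ≤ ∑ v ∈ Finset.univ.filter (fun v => 0 < assignedCount G A v), ε * bound v :=
          Finset.sum_le_sum hvert
      _ = ε * ∑ v ∈ Finset.univ.filter (fun v => 0 < assignedCount G A v), bound v :=
          (Finset.mul_sum _ _ _).symm
      _ ≤ ε * ∑ v : V, bound v := by
          refine mul_le_mul_of_nonneg_left ?_ (le_of_lt hε0)
          exact Finset.sum_le_sum_of_subset_of_nonneg (Finset.filter_subset _ _)
            (fun v _ _ => hbound0 v)
  -- identify the two parts of the bound sum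
  have hSA : ∑ v : V, (assignedCount G A v : ℝ) * (μ * β ^ (-(ℓ v : ℤ))) = SQ := by
    have h1 : ∀ v : V, (assignedCount G A v : ℝ) * (μ * β ^ (-(ℓ v : ℤ)))
        = ∑ u ∈ Finset.univ.filter (fun u => G.Adj v u ∧ A u v), w u v := by
      intro v
      have hconst : ∀ u ∈ Finset.univ.filter (fun u => G.Adj v u ∧ A u v),
          w u v = μ * β ^ (-(ℓ v : ℤ)) := by
        intro u hu
        have h := (Finset.mem_filter.mp hu).2
        have hl : ℓ v = max (ℓ u) (ℓ v) := hAlevel u v h.1.symm h.2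
        rw [hw]
        have h2 : ((ℓ u : ℤ) ⊔ (ℓ v : ℤ)) = (ℓ v : ℤ) := by
          have := congrArg (fun t : ℕ => (t : ℤ)) hl.symm
          push_cast at this
          exact this
        simp only []
        rw [h2]
      rw [Finset.sum_congr rfl hconst, Finset.sum_const, nsmul_eq_mul]
      rfl
    rw [hSQ, hQ, Finset.sum_congr rfl (fun v _ => h1 v), Finset.sum_sigma']
    refine Finset.sum_nbij' (i := fun x : (_ : V) × V => (x.2, x.1))
      (j := fun p : V × V => ⟨p.2, p.1⟩) (hi := ?_) (hj := ?_)
      (left_neg := fun x _ => rfl) (right_neg := fun p _ => rfl) (h := fun x _ => rfl)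
    · intro x hx
      simp only [Finset.mem_sigma, Finset.mem_filter, Finset.mem_univ, true_and] at hx ⊢
      exact hx
    · intro p hp
      simp only [Finset.mem_sigma, Finset.mem_filter, Finset.mem_univ, true_and] at hp ⊢
      exact hp
  have hSP : ∑ v : V, ∑ u ∈ Finset.univ.filter (fun u => G.Adj v u), w u v = 2 * SQ := by
    have hP : (∑ v : V, ∑ u ∈ Finset.univ.filter (fun u => G.Adj v u), w u v)
        = ∑ p ∈ Finset.univ.filter (fun p : V × V => G.Adj p.2 p.1), w p.1 p.2 := by
      rw [Finset.sum_sigma']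
      refine Finset.sum_nbij' (i := fun x : (_ : V) × V => (x.2, x.1))
        (j := fun p : V × V => ⟨p.2, p.1⟩) (hi := ?_) (hj := ?_)
        (left_neg := fun x _ => rfl) (right_neg := fun p _ => rfl) (h := fun x _ => rfl)
      · intro x hx
        simp only [Finset.mem_sigma, Finset.mem_filter, Finset.mem_univ, true_and] at hx ⊢
        exact hx
      · intro p hp
        simp only [Finset.mem_sigma, Finset.mem_filter, Finset.mem_univ, true_and] at hp ⊢
        exact hp
    rw [hP]
    have hsplit := Finset.sum_filter_add_sum_filter_not
      (Finset.univ.filter (fun p : V × V => G.Adj p.2 p.1)) (fun p => A p.1 p.2)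
      (fun p => w p.1 p.2)
    have hQ1 : (Finset.univ.filter (fun p : V × V => G.Adj p.2 p.1)).filter
        (fun p => A p.1 p.2) = Q := by
      rw [Finset.filter_filter]
    have hswap : ∑ p ∈ (Finset.univ.filter (fun p : V × V => G.Adj p.2 p.1)).filter
        (fun p => ¬ A p.1 p.2), w p.1 p.2 = SQ := by
      rw [hSQ]
      refine Finset.sum_nbij' (i := fun p => (p.2, p.1)) (j := fun p => (p.2, p.1))
        ?_ ?_ (fun a _ => rfl) (fun a _ => rfl) ?_
      · intro p hp
        rw [hQ]
        simp only [Finset.mem_filter, Finset.mem_univ, true_and] at hp ⊢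
        obtain ⟨hadj, hnA⟩ := hp
        rcases hA p.2 p.1 hadj with ⟨h1, h2⟩ | ⟨h1, h2⟩
        · exact ⟨hadj.symm, h1⟩
        · exact absurd h1 hnA
      · intro q hq
        rw [hQ] at hq
        simp only [Finset.mem_filter, Finset.mem_univ, true_and] at hq ⊢
        obtain ⟨hadj, hAq⟩ := hq
        refine ⟨hadj.symm, ?_⟩
        rcases hA q.2 q.1 hadj with ⟨h1, h2⟩ | ⟨h1, h2⟩
        · exact absurd hAq h2
        · exact h2
      · intro p _
        rw [hw]
        simp only []
        rw [max_comm]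
    rw [hQ1] at hsplit
    rw [← hsplit, hswap, hSQ]
    ring
  have hedge : ∑ e ∈ G.edgeFinset, μ * β ^ (-(edgeLevel ℓ e : ℤ)) = SQ := by
    rw [hSQ]
    symm
    refine Finset.sum_bij (fun p _ => s(p.1, p.2)) ?_ ?_ ?_ ?_
    · intro p hp
      rw [hQ] at hp
      simp only [Finset.mem_filter, Finset.mem_univ, true_and] at hp
      rw [SimpleGraph.mem_edgeFinset, SimpleGraph.mem_edgeSet]
      exact hp.1.symm
    · intro p hp q hq hpq
      rw [hQ] at hp hq
      simp only [Finset.mem_filter, Finset.mem_univ, true_and] at hp hq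
      rw [Sym2.eq_iff] at hpq
      rcases hpq with ⟨h1, h2⟩ | ⟨h1, h2⟩
      · exact Prod.ext h1 h2
      · exfalso
        rcases hA p.1 p.2 hp.1.symm with ⟨ha1, ha2⟩ | ⟨ha1, ha2⟩
        · exact ha2 (h2 ▸ h1 ▸ hq.2)
        · exact ha2 hp.2
    · intro e he
      rw [SimpleGraph.mem_edgeFinset] at he
      induction e using Sym2.ind with
      | _ x y =>
        rw [SimpleGraph.mem_edgeSet] at he
        rcases hA x y he with ⟨h1, h2⟩ | ⟨h1, h2⟩
        · refine ⟨(x, y), ?_, rfl⟩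
          rw [hQ]
          simp only [Finset.mem_filter, Finset.mem_univ, true_and]
          exact ⟨he.symm, h1⟩
        · refine ⟨(y, x), ?_, Sym2.eq_swap⟩
          rw [hQ]
          simp only [Finset.mem_filter, Finset.mem_univ, true_and]
          exact ⟨he, h1⟩
    · intro p hp
      rw [hw]
      simp only []
      have : edgeLevel ℓ s(p.1, p.2) = max (ℓ p.1) (ℓ p.2) := rfl
      rw [this]
      push_cast
      rfl
  -- assemble
  have hsumbound : ∑ v : V, bound v ≤ (β / (β - 1)) * SQ + 2 * SQ := by
    rw [hbound]
    rw [Finset.sum_add_distrib]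
    have e1 : ∑ v : V, (assignedCount G A v : ℝ) * (β / (β - 1)) * (μ * β ^ (-(ℓ v : ℤ)))
        = (β / (β - 1)) * ∑ v : V, (assignedCount G A v : ℝ) * (μ * β ^ (-(ℓ v : ℤ))) := by
      rw [Finset.mul_sum]
      exact Finset.sum_congr rfl fun v _ => by ring
    rw [e1, hSA, hSP]
  have hfinal : ε * ((β / (β - 1)) * SQ + 2 * SQ) ≤ ε * (2 * β / (β - 1) + 1) * SQ := by
    have hco : (β / (β - 1)) + 2 ≤ 2 * β / (β - 1) + 1 := by
      have h1 : (1:ℝ) ≤ β / (β - 1) := by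
        rw [le_div_iff₀ hb1]; linarith
      have h2 : 2 * β / (β - 1) = 2 * (β / (β - 1)) := by ring
      linarith
    have hmul := mul_le_mul_of_nonneg_right hco hSQ0
    calc ε * ((β / (β - 1)) * SQ + 2 * SQ) = ε * (((β / (β - 1)) + 2) * SQ) := by ring
      _ ≤ ε * ((2 * β / (β - 1) + 1) * SQ) := mul_le_mul_of_nonneg_left hmul (le_of_lt hε0)
      _ = ε * (2 * β / (β - 1) + 1) * SQ := by ring
  calc ∑ v ∈ Finset.univ.filter (fun v => 0 < assignedCount G A v),
      (⌈(assignedCount G A v : ℝ) / (k v : ℝ)⌉₊ : ℝ) * c v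
      ≤ ε * ∑ v : V, bound v := hstep1
    _ ≤ ε * ((β / (β - 1)) * SQ + 2 * SQ) :=
        mul_le_mul_of_nonneg_left hsumbound (le_of_lt hε0)
    _ ≤ ε * (2 * β / (β - 1) + 1) * SQ := hfinal
    _ = ε * (2 * β / (β - 1) + 1) * ∑ e ∈ G.edgeFinset, μ * β ^ (-(edgeLevel ℓ e : ℤ)) := by
        rw [hedge]
end

section
/- Let ε ≥ 1 and let an ε-tight valid level scheme on G with consistent edge assignment δ be given. Then for every feasible integral capacitated vertex cover (x, y) of G, Σ_{v : δ(v) ≠ ∅} ⌈|δ(v)|/k_v⌉·c_v ≤ ε·(2β/(β − 1) + 1)·Σ_{v ∈ V} c_v·x_v; in other words, selecting ⌈|δ(v)|/k_v⌉ copies of each vertex with δ(v) ≠ ∅ yields an ε·(2β/(β − 1) + 1)-approximate weighted minimum capacitated vertex cover. -/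
open scoped Classical

lemma min_mul_le_aux (k x D : ℕ) : min (k * x) D ≤ x * min k D := by
  rcases Nat.eq_zero_or_pos x with h | h
  · subst h; simp
  rcases le_total k D with h' | h'
  · calc min (k*x) D ≤ k*x := min_le_left _ _
      _ = x * min k D := by rw [min_eq_left h', mul_comm]
  · calc min (k*x) D ≤ D := min_le_right _ _
      _ ≤ x * D := Nat.le_mul_of_pos_left _ h
      _ = x * min k D := by rw [min_eq_right h']

lemma sum_comp_level {V : Type*} [Fintype V] [DecidableEq V] (ℓ : V → ℕ) {N : ℕ}
    (hN : ∀ u, ℓ u ≤ N) (s : Finset V) (f : V → ℝ) (F : ℕ → ℝ) :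
    ∑ u ∈ s, f u * F (ℓ u)
      = ∑ i ∈ Finset.range (N+1), (∑ u ∈ s.filter (fun u => ℓ u = i), f u) * F i := by
  rw [← Finset.sum_fiberwise_of_maps_to (g := ℓ) (t := Finset.range (N+1))
      (fun u _ => Finset.mem_range.2 (Nat.lt_succ_of_le (hN u)))]
  refine Finset.sum_congr rfl fun i _ => ?_
  rw [Finset.sum_mul]
  refine Finset.sum_congr rfl fun u hu => ?_
  rw [(Finset.mem_filter.1 hu).2]

/-- Given an `ε`-tight valid level scheme with consistent edge assignment `δ`, selecting
`⌈|δ(v)|/k_v⌉` copies of each vertex with `δ(v) ≠ ∅` yields an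
`ε·(2β/(β − 1) + 1)`-approximate weighted minimum capacitated vertex cover: its cost is at most
`ε·(2β/(β − 1) + 1)·Σ_{v ∈ V} c_v·x_v` for every feasible integral capacitated vertex cover
`(x, y)`. Here `y u v` denotes the coverage `y_{ev}` of the edge `e = {u,v}` by `v`. -/
theorem tight_scheme_approximation {V : Type*} [Fintype V] (G : SimpleGraph V)
    (c : V → ℝ) (k : V → ℕ) (β μ ε : ℝ) (ℓ : V → ℕ) (A : V → V → Prop)
    (hc : ∀ v, 0 < c v) (hk : ∀ v, 1 ≤ k v) (hβ : 1 < β) (hμ : ∀ v, c v < μ) (hε : 1 ≤ ε)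
    -- `A` assigns each edge to exactly one of its endpoints ...
    (hA : ∀ u v, G.Adj u v → (A u v ∧ ¬ A v u) ∨ (A v u ∧ ¬ A u v))
    -- ... whose level equals the edge level
    (hAlevel : ∀ u v, G.Adj u v → A u v → ℓ v = max (ℓ u) (ℓ v))
    -- the scheme is valid
    (hvalid : ∀ v, vertexWeight G β μ k ℓ v ≤ c v)
    -- and `ε`-tight
    (htight : ∀ v, 0 < assignedCount G A v → c v / ε < vertexWeight G β μ k ℓ v)
    -- feasible integral capacitated vertex cover (x, y)
    (x : V → ℕ) (y : V → V → ℕ)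
    (hy01 : ∀ u v, G.Adj u v → y u v ≤ 1)
    (hcover : ∀ u v, G.Adj u v → 1 ≤ y u v + y v u)
    (hcap : ∀ v, ∑ u ∈ Finset.univ.filter (fun u => G.Adj v u), y u v ≤ k v * x v)
    (hyx : ∀ u v, G.Adj u v → y u v ≤ x v) :
    ∑ v ∈ Finset.univ.filter (fun v => 0 < assignedCount G A v),
        (⌈(assignedCount G A v : ℝ) / (k v : ℝ)⌉₊ : ℝ) * c v
      ≤ ε * (2 * β / (β - 1) + 1) * ∑ v, c v * (x v : ℝ) := by
  classical
  cases isEmpty_or_nonempty V with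
  | inl h => simp
  | inr h =>
  obtain ⟨v0⟩ := h
  have hβ0 : (0:ℝ) < β := by linarith
  have hβ1 : (0:ℝ) < β - 1 := by linarith
  have hε0 : (0:ℝ) < ε := by linarith
  have hμ0 : (0:ℝ) < μ := lt_trans (hc v0) (hμ v0)
  set N : ℕ := Finset.univ.sup ℓ with hNdef
  have hℓN : ∀ u, ℓ u ≤ N := fun u => Finset.le_sup (Finset.mem_univ u)
  have hpow : ∀ i : ℕ, (0:ℝ) < β ^ (-(i:ℤ)) := fun i => zpow_pos hβ0 _
  set w : V → V → ℝ := fun v u => μ * β ^ (-(max (ℓ v) (ℓ u) : ℕ) : ℤ) with hwdef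
  have hw0 : ∀ v u, 0 ≤ w v u := fun v u => le_of_lt (mul_pos hμ0 (hpow _))
  have hwsymm : ∀ v u, w v u = w u v := fun v u => by simp [hwdef, max_comm]
  -- finite form of tail
  set Tfin : V → ℝ := fun v => ∑ i ∈ Finset.range (N+1),
      if ℓ v < i then (min (k v) (levelCount G ℓ v i) : ℝ) * μ * β ^ (-(i:ℤ)) else 0
    with hTdef
  have hW : ∀ v, vertexWeight G β μ k ℓ v
      = (min (k v) (levelCountRange G ℓ v 0 (ℓ v)) : ℝ) * μ * β ^ (-(ℓ v : ℤ)) + Tfin v := by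
    intro v
    unfold vertexWeight
    rw [hTdef]
    congr 1
    refine tsum_eq_sum (fun i hi => ?_)
    have hNi : N < i := by
      by_contra hcon
      exact hi (Finset.mem_range.2 (by omega))
    have hzero : levelCount G ℓ v i = 0 := by
      refine Finset.card_eq_zero.2 (Finset.filter_eq_empty_iff.2 ?_)
      rintro u -
      rintro ⟨-, hu⟩
      have := hℓN u
      omega
    rw [hzero]
    simp
  -- claim 1 : upper bound via geometric series
  have hz : ∀ i : ℕ, β ^ (-(i:ℤ)) = (β⁻¹) ^ i := fun i => by
    rw [zpow_neg, zpow_natCast, inv_pow]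
  have hr0 : (0:ℝ) ≤ β⁻¹ := by positivity
  have hr1 : β⁻¹ < 1 := by
    rw [inv_lt_one_iff₀]; right; exact hβ
  have hWub1 : ∀ v, vertexWeight G β μ k ℓ v ≤ β / (β - 1) * ((k v : ℝ) * (μ * β ^ (-(ℓ v : ℤ)))) := by
    intro v
    rw [hW v]
    set X : ℝ := β ^ (-(ℓ v : ℤ)) with hX
    have hX0 : 0 < X := hpow _
    have hmin : (min (k v) (levelCountRange G ℓ v 0 (ℓ v)) : ℝ) ≤ (k v : ℝ) :=
      min_le_left _ _
    have h1 : (min (k v) (levelCountRange G ℓ v 0 (ℓ v)) : ℝ) * μ * X ≤ (k v : ℝ) * μ * X := by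
      have := mul_le_mul_of_nonneg_right (mul_le_mul_of_nonneg_right hmin hμ0.le) hX0.le
      exact this
    have h2 : Tfin v ≤ (k v : ℝ) * μ * (X / (β - 1)) := by
      rw [hTdef]
      have key : X / (β - 1) = (β⁻¹) ^ (ℓ v + 1) / (1 - β⁻¹) := by
        rw [pow_succ, ← hz, ← hX]
        rw [div_eq_div_iff (by linarith) (by
          have : (0:ℝ) < 1 - β⁻¹ := by
            have : β⁻¹ < 1 := hr1
            linarith
          linarith)]
        field_simp
      calc (∑ i ∈ Finset.range (N+1),
            if ℓ v < i then (min (k v) (levelCount G ℓ v i) : ℝ) * μ * β ^ (-(i:ℤ)) else 0)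
          ≤ ∑ i ∈ Finset.range (N+1), (if ℓ v < i then (k v : ℝ) * μ * (β⁻¹) ^ i else 0) := by
            refine Finset.sum_le_sum fun i _ => ?_
            split
            · rw [hz i]
              refine mul_le_mul_of_nonneg_right
                (mul_le_mul_of_nonneg_right (min_le_left _ _) hμ0.le) (by positivity)
            · exact le_refl 0
        _ = ∑ i ∈ (Finset.range (N+1)).filter (fun i => ℓ v < i), (k v : ℝ) * μ * (β⁻¹) ^ i :=
            (Finset.sum_filter _ _).symm
        _ = (k v : ℝ) * μ * ∑ i ∈ Finset.Ico (ℓ v + 1) (N+1), (β⁻¹) ^ i := by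
            rw [Finset.mul_sum]
            refine Finset.sum_congr ?_ (fun i _ => rfl)
            ext i
            simp only [Finset.mem_filter, Finset.mem_range, Finset.mem_Ico]
            omega
        _ ≤ (k v : ℝ) * μ * ((β⁻¹) ^ (ℓ v + 1) / (1 - β⁻¹)) := by
            refine mul_le_mul_of_nonneg_left (geom_sum_Ico_le_of_lt_one hr0 hr1) (by positivity)
        _ = (k v : ℝ) * μ * (X / (β - 1)) := by rw [key]
    have hfinal : β / (β - 1) * ((k v : ℝ) * (μ * X))
        = (k v : ℝ) * μ * X + (k v : ℝ) * μ * (X / (β - 1)) := by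
      field_simp
      ring
    linarith
  -- claim 3 : assigned sum
  have hAsum : ∀ v, ∑ u, (if G.Adj v u ∧ A u v then w v u else 0)
      = (assignedCount G A v : ℝ) * (μ * β ^ (-(ℓ v : ℤ))) := by
    intro v
    rw [← Finset.sum_filter]
    have hconst : ∀ u ∈ Finset.univ.filter (fun u => G.Adj v u ∧ A u v),
        w v u = μ * β ^ (-(ℓ v : ℤ)) := by
      intro u hu
      obtain ⟨hadj, hAuv⟩ := (Finset.mem_filter.1 hu).2
      have hmax : max (ℓ v) (ℓ u) = ℓ v := by
        have := hAlevel u v hadj.symm hAuv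
        rw [max_comm]
        omega
      simp only [hwdef, hmax]
    rw [Finset.sum_congr rfl hconst, Finset.sum_const, nsmul_eq_mul]
    rfl
  -- claim 2
  have hWub2 : ∀ v, vertexWeight G β μ k ℓ v ≤ ∑ u, (if G.Adj v u then w v u else 0) := by
    intro v
    rw [hW v, ← Finset.sum_filter,
      ← Finset.sum_filter_add_sum_filter_not (Finset.univ.filter (fun u => G.Adj v u))
        (fun u => ℓ u ≤ ℓ v) (fun u => w v u)]
    refine add_le_add ?_ ?_
    · have hset : (Finset.univ.filter (fun u => G.Adj v u)).filter (fun u => ℓ u ≤ ℓ v)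
          = Finset.univ.filter (fun u => G.Adj v u ∧ 0 ≤ ℓ u ∧ ℓ u ≤ ℓ v) := by
        ext u
        simp only [Finset.mem_filter, Finset.mem_univ, true_and]
        exact ⟨fun ⟨h1, h2⟩ => ⟨h1, Nat.zero_le _, h2⟩, fun ⟨h1, _, h2⟩ => ⟨h1, h2⟩⟩
      rw [hset]
      have hconst : ∀ u ∈ Finset.univ.filter (fun u => G.Adj v u ∧ 0 ≤ ℓ u ∧ ℓ u ≤ ℓ v),
          w v u = μ * β ^ (-(ℓ v : ℤ)) := by
        intro u hu
        obtain ⟨-, -, h⟩ := (Finset.mem_filter.1 hu).2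
        simp only [hwdef]
        rw [max_eq_left h]
      rw [Finset.sum_congr rfl hconst, Finset.sum_const, nsmul_eq_mul]
      have hle : (min (k v) (levelCountRange G ℓ v 0 (ℓ v)) : ℝ)
          ≤ (((Finset.univ.filter (fun u => G.Adj v u ∧ 0 ≤ ℓ u ∧ ℓ u ≤ ℓ v)).card : ℕ) : ℝ) :=
        min_le_right _ _
      calc (min (k v) (levelCountRange G ℓ v 0 (ℓ v)) : ℝ) * μ * β ^ (-(ℓ v : ℤ))
          ≤ ((Finset.univ.filter (fun u => G.Adj v u ∧ 0 ≤ ℓ u ∧ ℓ u ≤ ℓ v)).card : ℝ) * μ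
              * β ^ (-(ℓ v : ℤ)) := by
            exact mul_le_mul_of_nonneg_right
              (mul_le_mul_of_nonneg_right hle hμ0.le) (hpow _).le
        _ = ((Finset.univ.filter (fun u => G.Adj v u ∧ 0 ≤ ℓ u ∧ ℓ u ≤ ℓ v)).card : ℝ)
              * (μ * β ^ (-(ℓ v : ℤ))) := by ring
    · set t := (Finset.univ.filter (fun u => G.Adj v u)).filter (fun u => ¬ ℓ u ≤ ℓ v) with ht
      have hrw : ∑ u ∈ t, w v u = ∑ u ∈ t, (1 : ℝ) * (μ * β ^ (-(ℓ u : ℤ))) := by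
        refine Finset.sum_congr rfl fun u hu => ?_
        have hgt : ¬ ℓ u ≤ ℓ v := (Finset.mem_filter.1 hu).2
        simp only [hwdef]
        rw [max_eq_right (by omega), one_mul]
      have hcomp : ∑ u ∈ t, (1 : ℝ) * (μ * β ^ (-(ℓ u : ℤ)))
          = ∑ i ∈ Finset.range (N+1),
              (∑ u ∈ t.filter (fun u => ℓ u = i), (1 : ℝ)) * (μ * β ^ (-(i : ℤ))) :=
        sum_comp_level ℓ hℓN t (fun _ => (1:ℝ)) (fun i => μ * β ^ (-(i:ℤ)))
      rw [hrw, hcomp, hTdef]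
      refine Finset.sum_le_sum fun i hi => ?_
      by_cases hlt : ℓ v < i
      · rw [if_pos hlt]
        have hteq : t.filter (fun u => ℓ u = i)
            = Finset.univ.filter (fun u => G.Adj v u ∧ ℓ u = i) := by
          ext u
          simp only [ht, Finset.mem_filter, Finset.mem_univ, true_and]
          constructor
          · rintro ⟨⟨h1, -⟩, h3⟩; exact ⟨h1, h3⟩
          · rintro ⟨h1, h3⟩; exact ⟨⟨h1, by omega⟩, h3⟩
        rw [hteq, Finset.sum_const, nsmul_eq_mul, mul_one]
        have hle : (min (k v) (levelCount G ℓ v i) : ℝ)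
            ≤ ((Finset.univ.filter (fun u => G.Adj v u ∧ ℓ u = i)).card : ℝ) :=
          min_le_right _ _
        calc (min (k v) (levelCount G ℓ v i) : ℝ) * μ * β ^ (-(i : ℤ))
            ≤ ((Finset.univ.filter (fun u => G.Adj v u ∧ ℓ u = i)).card : ℝ) * μ
                * β ^ (-(i : ℤ)) :=
              mul_le_mul_of_nonneg_right (mul_le_mul_of_nonneg_right hle hμ0.le) (hpow _).le
          _ = ((Finset.univ.filter (fun u => G.Adj v u ∧ ℓ u = i)).card : ℝ)
                * (μ * β ^ (-(i : ℤ))) := by ring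
      · rw [if_neg hlt]
        refine mul_nonneg (Finset.sum_nonneg fun _ _ => zero_le_one)
          (mul_pos hμ0 (hpow _)).le
  -- claim 4
  have hS : ∀ v, ∑ u, (if G.Adj v u then (y u v : ℝ) * w v u else 0) ≤ (x v : ℝ) * c v := by
    intro v
    have step : ∑ u, (if G.Adj v u then (y u v : ℝ) * w v u else 0)
        ≤ (x v : ℝ) * vertexWeight G β μ k ℓ v := by
      rw [hW v, ← Finset.sum_filter,
        ← Finset.sum_filter_add_sum_filter_not (Finset.univ.filter (fun u => G.Adj v u))
          (fun u => ℓ u ≤ ℓ v) (fun u => (y u v : ℝ) * w v u), mul_add]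
      refine add_le_add ?_ ?_
      · set s1 := (Finset.univ.filter (fun u => G.Adj v u)).filter (fun u => ℓ u ≤ ℓ v) with hs1
        have hconst : ∀ u ∈ s1, (y u v : ℝ) * w v u = (y u v : ℝ) * (μ * β ^ (-(ℓ v : ℤ))) := by
          intro u hu
          have h := (Finset.mem_filter.1 hu).2
          simp only [hwdef]
          rw [max_eq_left h]
        rw [Finset.sum_congr rfl hconst, ← Finset.sum_mul]
        have hs1card : s1.card = levelCountRange G ℓ v 0 (ℓ v) := by
          unfold levelCountRange
          congr 1
          ext u
          simp only [hs1, Finset.mem_filter, Finset.mem_univ, true_and]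
          constructor
          · rintro ⟨h1, h2⟩; exact ⟨h1, Nat.zero_le _, h2⟩
          · rintro ⟨h1, -, h2⟩; exact ⟨h1, h2⟩
        have hsum_le : (∑ u ∈ s1, y u v) ≤ x v * min (k v) (levelCountRange G ℓ v 0 (ℓ v)) := by
          refine le_trans (le_min ?_ ?_) (min_mul_le_aux _ _ _)
          · exact le_trans (Finset.sum_le_sum_of_subset (Finset.filter_subset _ _)) (hcap v)
          · rw [← hs1card]
            have := Finset.sum_le_card_nsmul s1 (fun u => y u v) 1 (fun u hu => by
              have hadj : G.Adj v u := (Finset.mem_filter.1 ((Finset.filter_subset _ _) hu)).2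
              exact hy01 u v hadj.symm)
            simpa using this
        have hcast : ((∑ u ∈ s1, y u v : ℕ) : ℝ)
            ≤ (x v : ℝ) * ((min (k v) (levelCountRange G ℓ v 0 (ℓ v)) : ℕ) : ℝ) := by
          exact_mod_cast hsum_le
        have hsumcast : ∑ u ∈ s1, (y u v : ℝ) = ((∑ u ∈ s1, y u v : ℕ) : ℝ) := by
          push_cast
          rfl
        rw [hsumcast]
        calc ((∑ u ∈ s1, y u v : ℕ) : ℝ) * (μ * β ^ (-(ℓ v : ℤ)))
            ≤ ((x v : ℝ) * ((min (k v) (levelCountRange G ℓ v 0 (ℓ v)) : ℕ) : ℝ))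
                * (μ * β ^ (-(ℓ v : ℤ))) :=
              mul_le_mul_of_nonneg_right hcast (mul_pos hμ0 (hpow _)).le
          _ = (x v : ℝ) * ((min (k v) (levelCountRange G ℓ v 0 (ℓ v)) : ℝ) * μ
                * β ^ (-(ℓ v : ℤ))) := by push_cast; ring
      · set s2 := (Finset.univ.filter (fun u => G.Adj v u)).filter (fun u => ¬ ℓ u ≤ ℓ v) with hs2
        have hrw : ∑ u ∈ s2, (y u v : ℝ) * w v u
            = ∑ u ∈ s2, (y u v : ℝ) * (μ * β ^ (-(ℓ u : ℤ))) := by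
          refine Finset.sum_congr rfl fun u hu => ?_
          have hgt : ¬ ℓ u ≤ ℓ v := (Finset.mem_filter.1 hu).2
          simp only [hwdef]
          rw [max_eq_right (by omega)]
        have hcomp : ∑ u ∈ s2, (y u v : ℝ) * (μ * β ^ (-(ℓ u : ℤ)))
            = ∑ i ∈ Finset.range (N+1),
                (∑ u ∈ s2.filter (fun u => ℓ u = i), (y u v : ℝ)) * (μ * β ^ (-(i : ℤ))) :=
          sum_comp_level ℓ hℓN s2 (fun u => (y u v : ℝ)) (fun i => μ * β ^ (-(i:ℤ)))
        rw [hrw, hcomp, hTdef, Finset.mul_sum]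
        refine Finset.sum_le_sum fun i hi => ?_
        by_cases hlt : ℓ v < i
        · rw [if_pos hlt]
          have hteq : s2.filter (fun u => ℓ u = i)
              = Finset.univ.filter (fun u => G.Adj v u ∧ ℓ u = i) := by
            ext u
            simp only [hs2, Finset.mem_filter, Finset.mem_univ, true_and]
            constructor
            · rintro ⟨⟨h1, -⟩, h3⟩; exact ⟨h1, h3⟩
            · rintro ⟨h1, h3⟩; exact ⟨⟨h1, by omega⟩, h3⟩
          have hsum_le : (∑ u ∈ s2.filter (fun u => ℓ u = i), y u v)
              ≤ x v * min (k v) (levelCount G ℓ v i) := by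
            refine le_trans (le_min ?_ ?_) (min_mul_le_aux _ _ _)
            · refine le_trans (Finset.sum_le_sum_of_subset ?_) (hcap v)
              exact le_trans (Finset.filter_subset _ _) (Finset.filter_subset _ _)
            · unfold levelCount
              rw [← hteq]
              have := Finset.sum_le_card_nsmul (s2.filter (fun u => ℓ u = i))
                (fun u => y u v) 1 (fun u hu => by
                  have hadj : G.Adj v u := (Finset.mem_filter.1
                    ((Finset.filter_subset _ _) ((Finset.filter_subset _ _) hu))).2
                  exact hy01 u v hadj.symm)
              simpa using this
          have hcast : ((∑ u ∈ s2.filter (fun u => ℓ u = i), y u v : ℕ) : ℝ)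
              ≤ (x v : ℝ) * ((min (k v) (levelCount G ℓ v i) : ℕ) : ℝ) := by
            exact_mod_cast hsum_le
          have hsumcast : ∑ u ∈ s2.filter (fun u => ℓ u = i), (y u v : ℝ)
              = ((∑ u ∈ s2.filter (fun u => ℓ u = i), y u v : ℕ) : ℝ) := by
            push_cast
            rfl
          rw [hsumcast]
          calc ((∑ u ∈ s2.filter (fun u => ℓ u = i), y u v : ℕ) : ℝ) * (μ * β ^ (-(i : ℤ)))
              ≤ ((x v : ℝ) * ((min (k v) (levelCount G ℓ v i) : ℕ) : ℝ))
                  * (μ * β ^ (-(i : ℤ))) :=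
                mul_le_mul_of_nonneg_right hcast (mul_pos hμ0 (hpow _)).le
            _ = (x v : ℝ) * ((min (k v) (levelCount G ℓ v i) : ℝ) * μ * β ^ (-(i : ℤ))) := by
                push_cast; ring
        · rw [if_neg hlt, mul_zero]
          have hempty : s2.filter (fun u => ℓ u = i) = ∅ := by
            ext u
            simp only [hs2, Finset.mem_filter, Finset.mem_univ, true_and,
              Finset.notMem_empty, iff_false]
            rintro ⟨⟨-, h2⟩, h3⟩
            omega
          rw [hempty]
          simp
    refine le_trans step (mul_le_mul_of_nonneg_left (hvalid v) (Nat.cast_nonneg _))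
  set SY : ℝ := ∑ v, ∑ u, (if G.Adj v u then (y u v : ℝ) * w v u else 0) with hSYdef
  have hSYcx : SY ≤ ∑ v, c v * (x v : ℝ) := by
    rw [hSYdef]
    refine Finset.sum_le_sum fun v _ => ?_
    rw [mul_comm (c v)]
    exact hS v
  have hSY0 : 0 ≤ SY := by
    refine Finset.sum_nonneg fun v _ => Finset.sum_nonneg fun u _ => ?_
    split
    · exact mul_nonneg (Nat.cast_nonneg _) (hw0 v u)
    · exact le_refl 0
  -- claim 5
  have hcomm : ∀ F : V → V → ℝ, ∑ v, ∑ u, F v u = ∑ v, ∑ u, F u v := fun F => Finset.sum_comm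
  have hB : ∑ v, ∑ u, (if G.Adj v u ∧ A u v then w v u else 0) ≤ SY := by
    have key : ∀ v u, (if G.Adj v u ∧ A u v then w v u else 0)
          + (if G.Adj u v ∧ A v u then w u v else 0)
        ≤ (if G.Adj v u then (y u v : ℝ) * w v u else 0)
          + (if G.Adj u v then (y v u : ℝ) * w u v else 0) := by
      intro v u
      by_cases hadj : G.Adj v u
      · have hadj' : G.Adj u v := hadj.symm
        rw [if_pos hadj, if_pos hadj', hwsymm u v]
        have hy : (1 : ℝ) ≤ (y u v : ℝ) + (y v u : ℝ) := by
          exact_mod_cast hcover u v hadj'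
        have hmul : w v u ≤ ((y u v : ℝ) + (y v u : ℝ)) * w v u := by
          nlinarith [hw0 v u]
        rcases hA v u hadj with ⟨h1, h2⟩ | ⟨h1, h2⟩
        · rw [if_neg (fun h => h2 h.2), if_pos ⟨hadj', h1⟩]
          nlinarith [hw0 v u]
        · rw [if_pos ⟨hadj, h1⟩, if_neg (fun h => h2 h.2)]
          nlinarith [hw0 v u]
      · have hadj' : ¬ G.Adj u v := fun h => hadj h.symm
        simp [hadj, hadj']
    have hsum : (∑ v, ∑ u, ((if G.Adj v u ∧ A u v then w v u else 0)
          + (if G.Adj u v ∧ A v u then w u v else 0)))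
        ≤ ∑ v, ∑ u, ((if G.Adj v u then (y u v : ℝ) * w v u else 0)
          + (if G.Adj u v then (y v u : ℝ) * w u v else 0)) :=
      Finset.sum_le_sum fun v _ => Finset.sum_le_sum fun u _ => key v u
    simp only [Finset.sum_add_distrib] at hsum
    have e1 : ∑ v, ∑ u, (if G.Adj u v ∧ A v u then w u v else 0)
        = ∑ v, ∑ u, (if G.Adj v u ∧ A u v then w v u else 0) :=
      (hcomm fun v u => if G.Adj v u ∧ A u v then w v u else 0).symm
    have e2 : ∑ v, ∑ u, (if G.Adj u v then (y v u : ℝ) * w u v else 0)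
        = ∑ v, ∑ u, (if G.Adj v u then (y u v : ℝ) * w v u else 0) :=
      (hcomm fun v u => if G.Adj v u then (y u v : ℝ) * w v u else 0).symm
    rw [e1, e2] at hsum
    rw [hSYdef]
    linarith
  -- claim 6
  have hC : ∑ v, ∑ u, (if G.Adj v u then w v u else 0) ≤ 2 * SY := by
    have key : ∀ v u, (if G.Adj v u then w v u else 0) + (if G.Adj u v then w u v else 0)
        ≤ 2 * ((if G.Adj v u then (y u v : ℝ) * w v u else 0)
          + (if G.Adj u v then (y v u : ℝ) * w u v else 0)) := by
      intro v u
      by_cases hadj : G.Adj v u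
      · have hadj' : G.Adj u v := hadj.symm
        rw [if_pos hadj, if_pos hadj', if_pos hadj, if_pos hadj', hwsymm u v]
        have hy : (1 : ℝ) ≤ (y u v : ℝ) + (y v u : ℝ) := by
          exact_mod_cast hcover u v hadj'
        nlinarith [hw0 v u]
      · have hadj' : ¬ G.Adj u v := fun h => hadj h.symm
        simp [hadj, hadj']
    have hsum : (∑ v, ∑ u, ((if G.Adj v u then w v u else 0) + (if G.Adj u v then w u v else 0)))
        ≤ ∑ v, ∑ u, (2 * ((if G.Adj v u then (y u v : ℝ) * w v u else 0)
          + (if G.Adj u v then (y v u : ℝ) * w u v else 0))) :=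
      Finset.sum_le_sum fun v _ => Finset.sum_le_sum fun u _ => key v u
    simp only [← Finset.mul_sum] at hsum
    simp only [Finset.sum_add_distrib] at hsum
    have e1 : ∑ v, ∑ u, (if G.Adj u v then w u v else 0)
        = ∑ v, ∑ u, (if G.Adj v u then w v u else 0) :=
      (hcomm fun v u => if G.Adj v u then w v u else 0).symm
    have e2 : ∑ v, ∑ u, (if G.Adj u v then (y v u : ℝ) * w u v else 0)
        = ∑ v, ∑ u, (if G.Adj v u then (y u v : ℝ) * w v u else 0) :=
      (hcomm fun v u => if G.Adj v u then (y u v : ℝ) * w v u else 0).symm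
    rw [e1, e2] at hsum
    rw [hSYdef]
    linarith
  -- per-active-vertex bound
  have hActive : ∀ v, 0 < assignedCount G A v →
      (⌈(assignedCount G A v : ℝ) / (k v : ℝ)⌉₊ : ℝ) * c v
        ≤ ε * (β / (β - 1) * (∑ u, (if G.Adj v u ∧ A u v then w v u else 0))
             + (∑ u, (if G.Adj v u then w v u else 0))) := by
    intro v hv
    have hWv := htight v hv
    set W : ℝ := vertexWeight G β μ k ℓ v with hWsetdef
    have hcW : c v ≤ ε * W := by
      have h1 : c v / ε < W := hWv
      rw [div_lt_iff₀ hε0] at h1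
      nlinarith
    set a : ℝ := (assignedCount G A v : ℝ) with hadef
    have ha1 : (1:ℝ) ≤ a := by rw [hadef]; exact_mod_cast hv
    have hk1 : (1:ℝ) ≤ (k v : ℝ) := by exact_mod_cast hk v
    have hkpos : (0:ℝ) < (k v : ℝ) := lt_of_lt_of_le one_pos hk1
    have hceil : (⌈a / (k v : ℝ)⌉₊ : ℝ) ≤ a / (k v : ℝ) + 1 :=
      (Nat.ceil_lt_add_one (by positivity)).le
    have step1 : (⌈a / (k v:ℝ)⌉₊ : ℝ) * c v ≤ (a / (k v:ℝ) + 1) * (ε * W) :=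
      mul_le_mul hceil hcW (hc v).le (by positivity)
    have step2 : a / (k v:ℝ) * W ≤ β / (β - 1) * (a * (μ * β ^ (-(ℓ v : ℤ)))) := by
      calc a / (k v:ℝ) * W
          ≤ a / (k v:ℝ) * (β / (β - 1) * ((k v : ℝ) * (μ * β ^ (-(ℓ v : ℤ))))) :=
            mul_le_mul_of_nonneg_left (hWub1 v) (by positivity)
        _ = β / (β - 1) * (a * (μ * β ^ (-(ℓ v : ℤ)))) := by
            field_simp
    have step3 : W ≤ ∑ u, (if G.Adj v u then w v u else 0) := hWub2 v
    calc (⌈a / (k v:ℝ)⌉₊ : ℝ) * c v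
        ≤ (a / (k v:ℝ) + 1) * (ε * W) := step1
      _ = ε * (a / (k v:ℝ) * W + W) := by ring
      _ ≤ ε * (β / (β - 1) * (a * (μ * β ^ (-(ℓ v : ℤ))))
            + ∑ u, (if G.Adj v u then w v u else 0)) :=
          mul_le_mul_of_nonneg_left (add_le_add step2 step3) hε0.le
      _ = ε * (β / (β - 1) * (∑ u, (if G.Adj v u ∧ A u v then w v u else 0))
             + (∑ u, (if G.Adj v u then w v u else 0))) := by rw [hAsum v]
  have hF0 : ∀ v, 0 ≤ ∑ u, (if G.Adj v u ∧ A u v then w v u else 0) := by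
    intro v
    refine Finset.sum_nonneg fun u _ => ?_
    by_cases h : G.Adj v u ∧ A u v
    · rw [if_pos h]; exact hw0 v u
    · rw [if_neg h]
  have hH0 : ∀ v, 0 ≤ ∑ u, (if G.Adj v u then w v u else 0) := by
    intro v
    refine Finset.sum_nonneg fun u _ => ?_
    by_cases h : G.Adj v u
    · rw [if_pos h]; exact hw0 v u
    · rw [if_neg h]
  have hbb : (0:ℝ) ≤ β / (β - 1) := div_nonneg hβ0.le hβ1.le
  have h1d : (1:ℝ) ≤ β / (β - 1) := by rw [le_div_iff₀ hβ1]; linarith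
  calc ∑ v ∈ Finset.univ.filter (fun v => 0 < assignedCount G A v),
        (⌈(assignedCount G A v : ℝ) / (k v : ℝ)⌉₊ : ℝ) * c v
      ≤ ∑ v ∈ Finset.univ.filter (fun v => 0 < assignedCount G A v),
          ε * (β / (β - 1) * (∑ u, (if G.Adj v u ∧ A u v then w v u else 0))
             + (∑ u, (if G.Adj v u then w v u else 0))) :=
        Finset.sum_le_sum fun v hv => hActive v (Finset.mem_filter.1 hv).2
    _ ≤ ∑ v, ε * (β / (β - 1) * (∑ u, (if G.Adj v u ∧ A u v then w v u else 0))
             + (∑ u, (if G.Adj v u then w v u else 0))) :=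
        Finset.sum_le_sum_of_subset_of_nonneg (Finset.filter_subset _ _)
          (fun v _ _ => mul_nonneg hε0.le (add_nonneg (mul_nonneg hbb (hF0 v)) (hH0 v)))
    _ = ε * (β / (β - 1) * (∑ v, ∑ u, (if G.Adj v u ∧ A u v then w v u else 0))
           + ∑ v, ∑ u, (if G.Adj v u then w v u else 0)) := by
        rw [← Finset.mul_sum, Finset.sum_add_distrib, ← Finset.mul_sum]
    _ ≤ ε * (β / (β - 1) * SY + 2 * SY) :=
        mul_le_mul_of_nonneg_left (add_le_add (mul_le_mul_of_nonneg_left hB hbb) hC) hε0.le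
    _ ≤ ε * (2 * β / (β - 1) + 1) * SY := by
        have hint : 0 ≤ ε * SY * (β / (β - 1) - 1) :=
          mul_nonneg (mul_nonneg hε0.le hSY0) (sub_nonneg.2 h1d)
        have expand : ε * (2 * β / (β - 1) + 1) * SY - ε * (β / (β - 1) * SY + 2 * SY)
            = ε * SY * (β / (β - 1) - 1) := by ring
        linarith
    _ ≤ ε * (2 * β / (β - 1) + 1) * ∑ v, c v * (x v : ℝ) := by
        refine mul_le_mul_of_nonneg_left hSYcx ?_
        have h2 : (0:ℝ) ≤ 2 * β / (β - 1) := div_nonneg (by linarith) hβ1.le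
        nlinarith
end

section
/- The weight of a vertex is non-increasing in its own level: for every vertex v and every i ∈ ℕ, W_v(i + 1) ≤ W_v(i). -/
set_option maxHeartbeats 1000000
open scoped Classical

/-- The weight of a vertex is non-increasing in its own level: for every vertex `v` and every
`i ∈ ℕ`, `W_v(i + 1) ≤ W_v(i)`, where `W_v(j)` is the weight of `v` computed with the level of `v`
replaced by `j` and all other vertex levels unchanged. -/
theorem weight_antitone_in_level {V : Type*} [Fintype V] (G : SimpleGraph V)
    (c : V → ℝ) (k : V → ℕ) (β μ : ℝ) (ℓ : V → ℕ)
    (hc : ∀ v, 0 < c v) (hk : ∀ v, 1 ≤ k v) (hβ : 1 < β) (hμ : ∀ v, c v < μ) :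
    ∀ (v : V) (i : ℕ),
      vertexWeight G β μ k (Function.update ℓ v (i + 1)) v
        ≤ vertexWeight G β μ k (Function.update ℓ v i) v := by
  intro v i
  have hμ0 : 0 < μ := (hc v).trans (hμ v)
  have hβ0 : (0:ℝ) < β := lt_trans one_pos hβ
  -- updating v's level doesn't change neighbor counts
  have hup : ∀ (j n : ℕ), levelCount G (Function.update ℓ v j) v n = levelCount G ℓ v n := by
    intro j n
    unfold levelCount
    congr 1
    apply Finset.filter_congr
    intro u _
    by_cases h : G.Adj v u
    · have hne : u ≠ v := fun e => G.loopless.irrefl v (e ▸ h)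
      rw [Function.update_of_ne hne]
    · simp [h]
  have hupR : ∀ (j a b : ℕ),
      levelCountRange G (Function.update ℓ v j) v a b = levelCountRange G ℓ v a b := by
    intro j a b
    unfold levelCountRange
    congr 1
    apply Finset.filter_congr
    intro u _
    by_cases h : G.Adj v u
    · have hne : u ≠ v := fun e => G.loopless.irrefl v (e ▸ h)
      rw [Function.update_of_ne hne]
    · simp [h]
  set a : ℕ → ℝ := fun n => (min (k v) (levelCount G ℓ v n) : ℝ) * μ * β ^ (-(n : ℤ)) with ha
  have hzpow : ∀ n : ℕ, β ^ (-(n : ℤ)) = (β⁻¹) ^ n := by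
    intro n
    rw [zpow_neg, zpow_natCast, inv_pow]
  have hpowpos : ∀ n : ℕ, (0:ℝ) < β ^ (-(n : ℤ)) := fun n => zpow_pos hβ0 _
  have hanonneg : ∀ n, 0 ≤ a n := by
    intro n
    have := (hpowpos n).le
    positivity
  have hsa : Summable a := by
    apply Summable.of_nonneg_of_le hanonneg (f := fun n => ((k v : ℝ) * μ) * (β⁻¹) ^ n)
    · intro n
      rw [ha]
      simp only [hzpow]
      have h1 : (min (k v) (levelCount G ℓ v n) : ℝ) ≤ (k v : ℝ) := by
        exact_mod_cast Nat.min_le_left _ _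
      have h2 : (0:ℝ) ≤ (β⁻¹) ^ n := by positivity
      have := mul_le_mul_of_nonneg_right (mul_le_mul_of_nonneg_right h1 hμ0.le) h2
      linarith
    · apply Summable.mul_left
      apply summable_geometric_of_lt_one (by positivity)
      exact inv_lt_one_of_one_lt₀ hβ
  have hsif : ∀ j : ℕ, Summable (fun n => if j < n then a n else 0) := by
    intro j
    apply Summable.of_nonneg_of_le _ _ hsa
    · intro n; split <;> simp [hanonneg]
    · intro n; split <;> simp [hanonneg]
  have hsone : Summable (fun n : ℕ => if n = i + 1 then a (i+1) else 0) := by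
    apply summable_of_ne_finset_zero (s := {i+1})
    intro n hn
    simp only [Finset.mem_singleton] at hn
    simp [hn]
  have hsplit : (∑' n : ℕ, if i < n then a n else 0)
      = a (i+1) + ∑' n : ℕ, if i + 1 < n then a n else 0 := by
    have heq : (fun n : ℕ => if i < n then a n else 0)
        = fun n : ℕ => (if n = i + 1 then a (i+1) else 0) + (if i + 1 < n then a n else 0) := by
      funext n
      by_cases h : n = i + 1
      · subst h; simp
      · by_cases h2 : i + 1 < n
        · have h3 : i < n := by omega
          simp [h, h2, h3]
        · have h3 : ¬ i < n := by omega
          simp [h, h2, h3]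
    rw [heq, Summable.tsum_add hsone (hsif (i+1)), tsum_ite_eq]
  -- count splitting
  have hcount : levelCountRange G ℓ v 0 (i+1)
      = levelCountRange G ℓ v 0 i + levelCount G ℓ v (i+1) := by
    unfold levelCountRange levelCount
    rw [← Finset.card_union_of_disjoint]
    · congr 1
      ext u
      simp only [Finset.mem_union, Finset.mem_filter, Finset.mem_univ, true_and]
      constructor
      · rintro ⟨hadj, -, hle⟩
        by_cases h : ℓ u = i + 1
        · exact Or.inr ⟨hadj, h⟩
        · exact Or.inl ⟨hadj, Nat.zero_le _, by omega⟩
      · rintro (⟨hadj, -, hle⟩ | ⟨hadj, heq⟩)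
        · exact ⟨hadj, Nat.zero_le _, by omega⟩
        · exact ⟨hadj, Nat.zero_le _, by omega⟩
    · rw [Finset.disjoint_filter]
      rintro u - ⟨-, -, hle⟩ ⟨-, heq⟩
      omega
  unfold vertexWeight
  simp only [Function.update_self, hup, hupR, ← ha]
  rw [hsplit]
  have key : (min (k v) (levelCountRange G ℓ v 0 (i+1)) : ℝ) * μ * β ^ (-((i:ℕ)+1 : ℤ))
      ≤ (min (k v) (levelCountRange G ℓ v 0 i) : ℝ) * μ * β ^ (-(i : ℤ)) + a (i+1) := by
    have hmin : min (k v) (levelCountRange G ℓ v 0 (i+1))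
        ≤ min (k v) (levelCountRange G ℓ v 0 i) + min (k v) (levelCount G ℓ v (i+1)) := by
      rw [hcount]; omega
    have hminR : (min (k v) (levelCountRange G ℓ v 0 (i+1)) : ℝ)
        ≤ (min (k v) (levelCountRange G ℓ v 0 i) : ℝ)
          + (min (k v) (levelCount G ℓ v (i+1)) : ℝ) := by exact_mod_cast hmin
    have hmono : β ^ (-((i:ℕ)+1 : ℤ)) ≤ β ^ (-(i : ℤ)) := by
      apply zpow_le_zpow_right₀ hβ.le
      omega
    have hp1 : (0:ℝ) < β ^ (-((i:ℕ)+1 : ℤ)) := zpow_pos hβ0 _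
    have hn1 : (0:ℝ) ≤ (min (k v) (levelCountRange G ℓ v 0 i) : ℝ) := by positivity
    have hn2 : (0:ℝ) ≤ (min (k v) (levelCount G ℓ v (i+1)) : ℝ) := by positivity
    have haeq : a (i+1) = (min (k v) (levelCount G ℓ v (i+1)) : ℝ) * μ * β ^ (-((i:ℕ)+1 : ℤ)) := by
      rw [ha]; norm_num
    rw [haeq]
    nlinarith [mul_nonneg (mul_nonneg hn1 hμ0.le) (sub_nonneg.2 hmono),
      mul_nonneg (mul_nonneg (sub_nonneg.2 hminR) hμ0.le) hp1.le]
  have := key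
  push_cast at this ⊢
  linarith [this]
end

section
/- Level-up effect on a neighbor: let u and v be adjacent vertices, let i = ℓ(v), and suppose ℓ(u) ≤ i. Let W_u′ denote the weight of u after the level of v is increased from i to i + 1, all other vertex levels unchanged. Then W_u′ ≥ W_u − μ·β^(−i); consequently (β^(ℓ(u)+1)/(μ(β − 1)))·max{0, W_u − W_u′} ≤ β/(β − 1). -/
open scoped Classical

section Aux

variable {V : Type*} [Fintype V] (G : SimpleGraph V)

lemma levelCount_eq_zero_aux (ℓ : V → ℕ) (u : V) {j : ℕ}
    (hj : j ∉ Finset.image ℓ Finset.univ) : levelCount G ℓ u j = 0 := by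
  rw [levelCount, Finset.card_eq_zero, Finset.filter_eq_empty_iff]
  rintro w - ⟨-, hw⟩
  exact hj (Finset.mem_image.mpr ⟨w, Finset.mem_univ w, hw⟩)

lemma summable_aux (β μ : ℝ) (K : ℕ) (ℓ : V → ℕ) (u : V) (L : ℕ) :
    Summable (fun j : ℕ =>
      if L < j then (min K (levelCount G ℓ u j) : ℝ) * μ * β ^ (-(j : ℤ)) else 0) := by
  apply summable_of_ne_finset_zero (s := Finset.image ℓ Finset.univ)
  intro j hj
  simp [levelCount_eq_zero_aux G ℓ u hj]

lemma count_mono_aux (ℓ : V → ℕ) (u v : V) (j : ℕ) (hj : j ≠ ℓ v) :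
    levelCount G ℓ u j ≤ levelCount G (Function.update ℓ v (ℓ v + 1)) u j := by
  apply Finset.card_le_card
  intro w hw
  simp only [Finset.mem_filter, Finset.mem_univ, true_and] at hw ⊢
  refine ⟨hw.1, ?_⟩
  rcases eq_or_ne w v with rfl | hwv
  · exact absurd hw.2.symm hj
  · rw [Function.update_of_ne hwv]; exact hw.2

lemma count_at_aux (ℓ : V → ℕ) (u v : V) :
    levelCount G ℓ u (ℓ v) ≤ levelCount G (Function.update ℓ v (ℓ v + 1)) u (ℓ v) + 1 := by
  unfold levelCount
  have hsub : (Finset.univ.filter fun w => G.Adj u w ∧ ℓ w = ℓ v) ⊆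
      insert v (Finset.univ.filter fun w =>
        G.Adj u w ∧ Function.update ℓ v (ℓ v + 1) w = ℓ v) := by
    intro w hw
    simp only [Finset.mem_filter, Finset.mem_univ, true_and] at hw
    rcases eq_or_ne w v with rfl | hwv
    · exact Finset.mem_insert_self _ _
    · refine Finset.mem_insert_of_mem ?_
      simp only [Finset.mem_filter, Finset.mem_univ, true_and]
      exact ⟨hw.1, by rw [Function.update_of_ne hwv]; exact hw.2⟩
  calc (Finset.univ.filter fun w => G.Adj u w ∧ ℓ w = ℓ v).card
      ≤ _ := Finset.card_le_card hsub
    _ ≤ _ + 1 := Finset.card_insert_le _ _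

lemma range_mono_aux (ℓ : V → ℕ) (u v : V) {L : ℕ} (hL : L < ℓ v) :
    levelCountRange G ℓ u 0 L ≤ levelCountRange G (Function.update ℓ v (ℓ v + 1)) u 0 L := by
  apply Finset.card_le_card
  intro w hw
  simp only [Finset.mem_filter, Finset.mem_univ, true_and] at hw ⊢
  refine ⟨hw.1, Nat.zero_le _, ?_⟩
  rcases eq_or_ne w v with rfl | hwv
  · omega
  · rw [Function.update_of_ne hwv]; exact hw.2.2

lemma range_at_aux (ℓ : V → ℕ) (u v : V) (L : ℕ) :
    levelCountRange G ℓ u 0 L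
      ≤ levelCountRange G (Function.update ℓ v (ℓ v + 1)) u 0 L + 1 := by
  unfold levelCountRange
  have hsub : (Finset.univ.filter fun w => G.Adj u w ∧ 0 ≤ ℓ w ∧ ℓ w ≤ L) ⊆
      insert v (Finset.univ.filter fun w =>
        G.Adj u w ∧ 0 ≤ Function.update ℓ v (ℓ v + 1) w ∧
          Function.update ℓ v (ℓ v + 1) w ≤ L) := by
    intro w hw
    simp only [Finset.mem_filter, Finset.mem_univ, true_and] at hw
    rcases eq_or_ne w v with rfl | hwv
    · exact Finset.mem_insert_self _ _
    · refine Finset.mem_insert_of_mem ?_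
      simp only [Finset.mem_filter, Finset.mem_univ, true_and]
      exact ⟨hw.1, Nat.zero_le _, by rw [Function.update_of_ne hwv]; exact hw.2.2⟩
  calc (Finset.univ.filter fun w => G.Adj u w ∧ 0 ≤ ℓ w ∧ ℓ w ≤ L).card
      ≤ _ := Finset.card_le_card hsub
    _ ≤ _ + 1 := Finset.card_insert_le _ _

end Aux

/-- Level-up effect on a neighbor: if `u` and `v` are adjacent, `i = ℓ(v)`, `ℓ(u) ≤ i`, and `W_u′`
is the weight of `u` after the level of `v` is increased from `i` to `i + 1` (all other levels
unchanged), then `W_u′ ≥ W_u − μ·β^(−i)`, and consequently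
`(β^(ℓ(u)+1)/(μ(β − 1)))·max{0, W_u − W_u′} ≤ β/(β − 1)`. -/
theorem level_up_neighbor_effect {V : Type*} [Fintype V] (G : SimpleGraph V)
    (c : V → ℝ) (k : V → ℕ) (β μ : ℝ) (ℓ : V → ℕ) (u v : V)
    (hc : ∀ w, 0 < c w) (hk : ∀ w, 1 ≤ k w) (hβ : 1 < β) (hμ : ∀ w, c w < μ)
    (hadj : G.Adj u v) (hlev : ℓ u ≤ ℓ v) :
    vertexWeight G β μ k ℓ u - μ * β ^ (-(ℓ v : ℤ))
        ≤ vertexWeight G β μ k (Function.update ℓ v (ℓ v + 1)) u ∧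
    (β ^ (ℓ u + 1) / (μ * (β - 1))) *
        max 0 (vertexWeight G β μ k ℓ u
          - vertexWeight G β μ k (Function.update ℓ v (ℓ v + 1)) u)
      ≤ β / (β - 1) := by
  have hne : u ≠ v := hadj.ne
  have hμ0 : 0 < μ := (hc u).trans (hμ u)
  have hβ0 : (0 : ℝ) < β := lt_trans one_pos hβ
  set ℓ' := Function.update ℓ v (ℓ v + 1) with hℓ'
  have hℓ'u : ℓ' u = ℓ u := Function.update_of_ne hne _ _
  set C : ℝ := μ * β ^ (-(ℓ v : ℤ)) with hC
  have hC0 : 0 < C := by positivity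
  -- notation for the two tsum summands
  set f : ℕ → ℝ := fun j =>
    if ℓ u < j then (min (k u) (levelCount G ℓ u j) : ℝ) * μ * β ^ (-(j : ℤ)) else 0 with hf
  set f' : ℕ → ℝ := fun j =>
    if ℓ u < j then (min (k u) (levelCount G ℓ' u j) : ℝ) * μ * β ^ (-(j : ℤ)) else 0 with hf'
  have hsf : Summable f := summable_aux G β μ (k u) ℓ u (ℓ u)
  have hsf' : Summable f' := summable_aux G β μ (k u) ℓ' u (ℓ u)
  have hW : vertexWeight G β μ k ℓ u =
      (min (k u) (levelCountRange G ℓ u 0 (ℓ u)) : ℝ) * μ * β ^ (-(ℓ u : ℤ)) + ∑' j, f j := rfl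
  have hW' : vertexWeight G β μ k ℓ' u =
      (min (k u) (levelCountRange G ℓ' u 0 (ℓ u)) : ℝ) * μ * β ^ (-(ℓ u : ℤ)) + ∑' j, f' j := by
    rw [vertexWeight, hℓ'u]
  have key : vertexWeight G β μ k ℓ u - C ≤ vertexWeight G β μ k ℓ' u := by
    rw [sub_le_iff_le_add, hW, hW']
    rcases eq_or_lt_of_le hlev with heq | hlt
    · -- ℓ u = ℓ v : the range term loses at most one neighbor, tail terms only grow
      have hA : (min (k u) (levelCountRange G ℓ u 0 (ℓ u)) : ℝ) * μ * β ^ (-(ℓ u : ℤ))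
          ≤ (min (k u) (levelCountRange G ℓ' u 0 (ℓ u)) : ℝ) * μ * β ^ (-(ℓ u : ℤ)) + C := by
        have h1 := range_at_aux G ℓ u v (ℓ u)
        rw [← hℓ'] at h1
        have h2 : min (k u) (levelCountRange G ℓ u 0 (ℓ u))
            ≤ min (k u) (levelCountRange G ℓ' u 0 (ℓ u)) + 1 := by omega
        have h2' : (min (k u) (levelCountRange G ℓ u 0 (ℓ u)) : ℝ)
            ≤ (min (k u) (levelCountRange G ℓ' u 0 (ℓ u)) : ℝ) + 1 := by exact_mod_cast h2
        have hb : (0:ℝ) < β ^ (-(ℓ u : ℤ)) := by positivity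
        rw [hC, ← heq]
        have h3 := mul_le_mul_of_nonneg_right
          (mul_le_mul_of_nonneg_right h2' hμ0.le) hb.le
        linarith
      have hS : ∑' j, f j ≤ ∑' j, f' j := by
        refine Summable.tsum_le_tsum (fun j => ?_) hsf hsf'
        rw [hf, hf']
        by_cases hj : ℓ u < j
        · simp only [hj, if_true]
          have hcnt : levelCount G ℓ u j ≤ levelCount G ℓ' u j :=
            count_mono_aux G ℓ u v j (by omega)
          have : (min (k u) (levelCount G ℓ u j) : ℝ) ≤ (min (k u) (levelCount G ℓ' u j) : ℝ) := by
            exact_mod_cast min_le_min (le_refl _) hcnt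
          have hb : (0:ℝ) < β ^ (-(j : ℤ)) := by positivity
          have h3 := mul_le_mul_of_nonneg_right
            (mul_le_mul_of_nonneg_right this hμ0.le) hb.le
          linarith
        · simp [hj]
      linarith
    · -- ℓ u < ℓ v : the range term only grows, the tail loses at most μ β^{-ℓ v}
      have hA : (min (k u) (levelCountRange G ℓ u 0 (ℓ u)) : ℝ) * μ * β ^ (-(ℓ u : ℤ))
          ≤ (min (k u) (levelCountRange G ℓ' u 0 (ℓ u)) : ℝ) * μ * β ^ (-(ℓ u : ℤ)) := by
        have h1 : (min (k u) (levelCountRange G ℓ u 0 (ℓ u)) : ℝ)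
            ≤ (min (k u) (levelCountRange G ℓ' u 0 (ℓ u)) : ℝ) := by
          exact_mod_cast min_le_min (le_refl _) (range_mono_aux G ℓ u v hlt)
        have hb : (0:ℝ) < β ^ (-(ℓ u : ℤ)) := by positivity
        have h3 := mul_le_mul_of_nonneg_right
          (mul_le_mul_of_nonneg_right h1 hμ0.le) hb.le
        linarith
      have hptwise : ∀ j, f j ≤ f' j + (if j = ℓ v then C else 0) := by
        intro j
        rw [hf, hf']
        by_cases hj : ℓ u < j
        · simp only [hj, if_true]
          by_cases hjv : j = ℓ v
          · subst hjv
            simp only [eq_self_iff_true, if_true]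
            have h1 := count_at_aux G ℓ u v
            rw [← hℓ'] at h1
            have h2 : min (k u) (levelCount G ℓ u (ℓ v))
                ≤ min (k u) (levelCount G ℓ' u (ℓ v)) + 1 := by omega
            have h2' : (min (k u) (levelCount G ℓ u (ℓ v)) : ℝ)
                ≤ (min (k u) (levelCount G ℓ' u (ℓ v)) : ℝ) + 1 := by exact_mod_cast h2
            have hb : (0:ℝ) < β ^ (-(ℓ v : ℤ)) := by positivity
            rw [hC]
            have h3 := mul_le_mul_of_nonneg_right
              (mul_le_mul_of_nonneg_right h2' hμ0.le) hb.le
            linarith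
          · simp only [hjv, if_false, add_zero]
            have hcnt : levelCount G ℓ u j ≤ levelCount G ℓ' u j :=
              count_mono_aux G ℓ u v j hjv
            have : (min (k u) (levelCount G ℓ u j) : ℝ)
                ≤ (min (k u) (levelCount G ℓ' u j) : ℝ) := by
              exact_mod_cast min_le_min (le_refl _) hcnt
            have hb : (0:ℝ) < β ^ (-(j : ℤ)) := by positivity
            have h3 := mul_le_mul_of_nonneg_right
              (mul_le_mul_of_nonneg_right this hμ0.le) hb.le
            linarith
        · simp only [if_neg hj]
          have : (0:ℝ) ≤ if j = ℓ v then C else 0 := by split <;> simp [hC0.le]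
          linarith
      have hsind : Summable (fun j : ℕ => if j = ℓ v then C else 0) := by
        apply summable_of_ne_finset_zero (s := {ℓ v})
        intro j hj
        simp only [Finset.mem_singleton] at hj
        simp [hj]
      have hS : ∑' j, f j ≤ ∑' j, f' j + C := by
        calc ∑' j, f j ≤ ∑' j, (f' j + if j = ℓ v then C else 0) :=
              Summable.tsum_le_tsum hptwise hsf (hsf'.add hsind)
          _ = ∑' j, f' j + ∑' j, (if j = ℓ v then C else 0) := Summable.tsum_add hsf' hsind
          _ = ∑' j, f' j + C := by rw [tsum_ite_eq]
      linarith
  refine ⟨key, ?_⟩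
  have hmax : max 0 (vertexWeight G β μ k ℓ u - vertexWeight G β μ k ℓ' u) ≤ C :=
    max_le hC0.le (by linarith)
  have hb1 : (0:ℝ) < β - 1 := by linarith
  have hfac : (0:ℝ) ≤ β ^ (ℓ u + 1) / (μ * (β - 1)) :=
    div_nonneg (by positivity) (mul_nonneg hμ0.le hb1.le)
  calc (β ^ (ℓ u + 1) / (μ * (β - 1))) *
        max 0 (vertexWeight G β μ k ℓ u - vertexWeight G β μ k ℓ' u)
      ≤ (β ^ (ℓ u + 1) / (μ * (β - 1))) * C := mul_le_mul_of_nonneg_left hmax hfac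
    _ = (β ^ (ℓ u + 1) * β ^ (-(ℓ v : ℤ))) / (β - 1) := by
        rw [hC]
        rw [div_mul_eq_mul_div, div_eq_div_iff (mul_pos hμ0 hb1).ne' hb1.ne']
        ring
    _ ≤ β / (β - 1) := by
        have h1 : (β : ℝ) ^ (ℓ u + 1) * β ^ (-(ℓ v : ℤ)) = β ^ ((ℓ u : ℤ) + 1 - ℓ v) := by
          rw [← zpow_natCast β (ℓ u + 1), ← zpow_add₀ (ne_of_gt hβ0)]
          push_cast
          ring_nf
        have h2 : (β : ℝ) ^ ((ℓ u : ℤ) + 1 - ℓ v) ≤ β ^ (1 : ℤ) :=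
          zpow_le_zpow_right₀ hβ.le (by omega)
        rw [h1]
        apply div_le_div_of_nonneg_right ?_ (by linarith)
        simpa using h2
end

section
/- Capacitated set cover (hypergraph) approximation bound: let ε ≥ 1 and let an ε-tight valid level scheme on the hypergraph H with consistent edge assignment δ be given. Then Σ_{v : δ(v) ≠ ∅} ⌈|δ(v)|/k_v⌉·c_v ≤ ε·(2β/(β − 1) + f − 1)·Σ_{e ∈ E} μ·β^(−ℓ(e)). -/
open scoped Classical

/-- `D̂_v(i)`: the number of hyperedges of `E` containing `v` whose level (the maximum level of
their vertices) equals `i`. -/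
noncomputable def hyperIncCount {V : Type*} (E : Finset (Finset V))
    (ℓ : V → ℕ) (v : V) (i : ℕ) : ℕ :=
  (E.filter fun e => v ∈ e ∧ e.sup ℓ = i).card

/-- The weight of a vertex `v` in the hypergraph: `W_v = Σ_i min{k_v, D̂_v(i)}·μ·β^(−i)`. -/
noncomputable def hyperWeight {V : Type*} (E : Finset (Finset V))
    (β μ : ℝ) (k : V → ℕ) (ℓ : V → ℕ) (v : V) : ℝ :=
  ∑' i : ℕ, (min (k v) (hyperIncCount E ℓ v i) : ℝ) * μ * β ^ (-(i : ℤ))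

lemma mygeom (r : ℝ) (h0 : 0 ≤ r) (h1 : r < 1) (n : ℕ) :
    ∑ i ∈ Finset.range n, r ^ i ≤ 1/(1-r) := by
  have h2 : (0:ℝ) < 1 - r := by linarith
  rw [geom_sum_eq (ne_of_lt h1) n]
  have e1 : (r ^ n - 1) / (r - 1) = (1 - r ^ n) / (1 - r) := by
    rw [div_eq_div_iff (by linarith) (by linarith)]; ring
  rw [e1]
  gcongr
  nlinarith [pow_nonneg h0 n]

section Aux
variable {V : Type*} (E : Finset (Finset V)) (β μ : ℝ) (k ℓ : V → ℕ)

lemma hyperIncCount_eq_zero_of_lt (v : V) (i : ℕ) (hi : (E.sup fun e => e.sup ℓ) < i) :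
    hyperIncCount E ℓ v i = 0 := by
  rw [hyperIncCount, Finset.card_eq_zero, Finset.filter_eq_empty_iff]
  rintro e he ⟨-, hsup⟩
  exact absurd (hsup ▸ Finset.le_sup (f := fun e => e.sup ℓ) he) (not_le.mpr hi)

lemma hyperWeight_eq_sum (v : V) :
    hyperWeight E β μ k ℓ v =
      ∑ i ∈ Finset.range ((E.sup fun e => e.sup ℓ) + 1),
        (min (k v) (hyperIncCount E ℓ v i) : ℝ) * μ * β ^ (-(i : ℤ)) := by
  refine tsum_eq_sum ?_
  intro i hi
  simp only [Finset.mem_range, not_lt, Nat.succ_le_iff] at hi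
  rw [hyperIncCount_eq_zero_of_lt E ℓ v i hi]
  simp

lemma sum_count_eq (v : V) :
    ∑ i ∈ Finset.range ((E.sup fun e => e.sup ℓ) + 1),
        (hyperIncCount E ℓ v i : ℝ) * μ * β ^ (-(i : ℤ))
      = ∑ e ∈ E.filter (fun e => v ∈ e), μ * β ^ (-((e.sup ℓ : ℕ) : ℤ)) := by
  have hmap : ∀ e ∈ E.filter (fun e => v ∈ e),
      e.sup ℓ ∈ Finset.range ((E.sup fun e => e.sup ℓ) + 1) := fun e he => by
    simp only [Finset.mem_range, Nat.lt_succ_iff]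
    exact Finset.le_sup (f := fun e => e.sup ℓ) (Finset.mem_filter.mp he).1
  have h := Finset.sum_fiberwise_of_maps_to hmap (fun e => μ * β ^ (-((e.sup ℓ : ℕ) : ℤ)))
  rw [← h]
  refine Finset.sum_congr rfl fun i _ => ?_
  rw [Finset.sum_congr rfl (fun e he => by
    rw [(Finset.mem_filter.mp he).2])]
  rw [Finset.sum_const, Finset.filter_filter, nsmul_eq_mul]
  rw [hyperIncCount]
  ring

lemma hyperWeight_le_sum (hβ : 1 < β) (hμ : 0 ≤ μ) (v : V) :
    hyperWeight E β μ k ℓ v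
      ≤ ∑ e ∈ E.filter (fun e => v ∈ e), μ * β ^ (-((e.sup ℓ : ℕ) : ℤ)) := by
  have hβ0 : (0:ℝ) < β := one_pos.trans hβ
  rw [hyperWeight_eq_sum, ← sum_count_eq E β μ ℓ v]
  refine Finset.sum_le_sum fun i _ => ?_
  have : (0:ℝ) < β ^ (-(i:ℤ)) := zpow_pos hβ0 _
  gcongr
  exact_mod_cast min_le_right _ _

lemma hyperWeight_le_geom (hβ : 1 < β) (hμ : 0 ≤ μ) (v : V) :
    hyperWeight E β μ k ℓ v ≤ (k v : ℝ) * μ * β ^ (-(ℓ v : ℤ)) * (β / (β - 1)) := by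
  have hβ0 : (0:ℝ) < β := one_pos.trans hβ
  rw [hyperWeight_eq_sum]
  set M := (E.sup fun e => e.sup ℓ) + 1 with hM
  have step1 : ∀ i ∈ Finset.range M,
      (min (k v) (hyperIncCount E ℓ v i) : ℝ) * μ * β ^ (-(i : ℤ))
        ≤ if ℓ v ≤ i then (k v : ℝ) * μ * β ^ (-(i : ℤ)) else 0 := by
    intro i _
    by_cases h : ℓ v ≤ i
    · rw [if_pos h]
      have : (0:ℝ) < β ^ (-(i:ℤ)) := zpow_pos hβ0 _
      gcongr
      exact_mod_cast min_le_left _ _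
    · rw [if_neg h]
      have hz : hyperIncCount E ℓ v i = 0 := by
        rw [hyperIncCount, Finset.card_eq_zero, Finset.filter_eq_empty_iff]
        rintro e he ⟨hv, hsup⟩
        exact h (hsup ▸ Finset.le_sup hv)
      simp [hz]
  calc ∑ i ∈ Finset.range M, (min (k v) (hyperIncCount E ℓ v i) : ℝ) * μ * β ^ (-(i : ℤ))
      ≤ ∑ i ∈ Finset.range M, (if ℓ v ≤ i then (k v : ℝ) * μ * β ^ (-(i : ℤ)) else 0) :=
        Finset.sum_le_sum step1
    _ = ∑ i ∈ Finset.Ico (ℓ v) M, (k v : ℝ) * μ * β ^ (-(i : ℤ)) := by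
        rw [← Finset.sum_filter]
        congr 1
        ext i
        simp only [Finset.mem_filter, Finset.mem_range, Finset.mem_Ico]
        tauto
    _ = (k v : ℝ) * μ * ∑ i ∈ Finset.Ico (ℓ v) M, β ^ (-(i : ℤ)) := by
        rw [Finset.mul_sum]
    _ ≤ (k v : ℝ) * μ * (β ^ (-(ℓ v : ℤ)) * (β / (β - 1))) := by
        have hsum : ∑ i ∈ Finset.Ico (ℓ v) M, β ^ (-(i : ℤ))
            ≤ β ^ (-(ℓ v : ℤ)) * (β / (β - 1)) := by
          rw [Finset.sum_Ico_eq_sum_range]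
          have hβne : β ≠ 0 := ne_of_gt hβ0
          have : ∀ t ∈ Finset.range (M - ℓ v),
              β ^ (-((ℓ v + t : ℕ) : ℤ)) = β ^ (-(ℓ v : ℤ)) * (β⁻¹) ^ t := by
            intro t _
            have hcast : (-((ℓ v + t : ℕ) : ℤ)) = (-(ℓ v : ℤ)) + (-(t : ℤ)) := by
              push_cast; ring
            rw [hcast, zpow_add₀ hβne, zpow_neg, zpow_natCast, ← inv_pow,
              zpow_neg, zpow_natCast, ← inv_pow]
          rw [Finset.sum_congr rfl this, ← Finset.mul_sum]
          have hr0 : (0:ℝ) ≤ β⁻¹ := by positivity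
          have hr1 : β⁻¹ < 1 := inv_lt_one_of_one_lt₀ hβ
          have hg := mygeom β⁻¹ hr0 hr1 (M - ℓ v)
          have hgeq : 1 / (1 - β⁻¹) = β / (β - 1) := by
            rw [div_eq_div_iff (ne_of_gt (by linarith : (0:ℝ) < 1 - β⁻¹))
              (ne_of_gt (by linarith : (0:ℝ) < β - 1))]
            field_simp
          calc β ^ (-(ℓ v : ℤ)) * ∑ t ∈ Finset.range (M - ℓ v), β⁻¹ ^ t
              ≤ β ^ (-(ℓ v : ℤ)) * (1 / (1 - β⁻¹)) := by
                have : (0:ℝ) ≤ β ^ (-(ℓ v : ℤ)) := le_of_lt (zpow_pos hβ0 _)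
                exact mul_le_mul_of_nonneg_left hg this
            _ = β ^ (-(ℓ v : ℤ)) * (β / (β - 1)) := by rw [hgeq]
        have hkm : (0:ℝ) ≤ (k v : ℝ) * μ := by positivity
        exact mul_le_mul_of_nonneg_left hsum hkm
    _ = (k v : ℝ) * μ * β ^ (-(ℓ v : ℤ)) * (β / (β - 1)) := by ring

end Aux

/-- Capacitated set cover (hypergraph) approximation bound: given an `ε`-tight valid level scheme
on the hypergraph `H = (V, E)` (each hyperedge containing at least one and at most `f` vertices)
with consistent edge assignment `δ(v) = {e ∈ E | A e = v}`,
`Σ_{v : δ(v) ≠ ∅} ⌈|δ(v)|/k_v⌉·c_v ≤ ε·(2β/(β − 1) + f − 1)·Σ_{e ∈ E} μ·β^(−ℓ(e))`. -/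
theorem capacitated_set_cover_bound {V : Type*} [Fintype V] (E : Finset (Finset V)) (f : ℕ)
    (c : V → ℝ) (k : V → ℕ) (β μ ε : ℝ) (ℓ : V → ℕ) (A : Finset V → V)
    (hc : ∀ v, 0 < c v) (hk : ∀ v, 1 ≤ k v) (hβ : 1 < β) (hμ : ∀ v, c v < μ) (hε : 1 ≤ ε)
    -- every hyperedge contains at least one and at most `f` vertices
    (hE : ∀ e ∈ E, 1 ≤ e.card ∧ e.card ≤ f)
    -- `A` assigns each hyperedge to exactly one of its vertices, whose level is the edge level
    (hA : ∀ e ∈ E, A e ∈ e ∧ ℓ (A e) = e.sup ℓ)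
    -- the scheme is valid
    (hvalid : ∀ v, hyperWeight E β μ k ℓ v ≤ c v)
    -- and `ε`-tight
    (htight : ∀ v, 0 < (E.filter fun e => A e = v).card → c v / ε < hyperWeight E β μ k ℓ v) :
    ∑ v ∈ Finset.univ.filter (fun v => 0 < (E.filter fun e => A e = v).card),
        (⌈((E.filter fun e => A e = v).card : ℝ) / (k v : ℝ)⌉₊ : ℝ) * c v
      ≤ ε * (2 * β / (β - 1) + (f : ℝ) - 1) * ∑ e ∈ E, μ * β ^ (-((e.sup ℓ : ℕ) : ℤ)) := by
  classical
  rcases E.eq_empty_or_nonempty with rfl | ⟨e₀, he₀⟩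
  · simp
  obtain ⟨v₀, hv₀⟩ := Finset.card_pos.mp (lt_of_lt_of_le one_pos (hE e₀ he₀).1)
  have hμ0 : 0 < μ := (hc v₀).trans (hμ v₀)
  have hf1 : 1 ≤ f := le_trans (hE e₀ he₀).1 (hE e₀ he₀).2
  have hβ0 : (0:ℝ) < β := one_pos.trans hβ
  have hβ1 : (0:ℝ) < β - 1 := sub_pos.mpr hβ
  have hε0 : (0:ℝ) < ε := one_pos.trans_le hε
  set G : ℝ := 2 * β / (β - 1) with hG
  have hG1 : (1:ℝ) ≤ G := by rw [hG, le_div_iff₀ hβ1]; linarith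
  set w : Finset V → ℝ := fun e => μ * β ^ (-((e.sup ℓ : ℕ) : ℤ)) with hw
  have hw0 : ∀ e, 0 ≤ w e := fun e => by rw [hw]; positivity
  -- per-vertex key bound
  have key : ∀ v, 0 < (E.filter fun e => A e = v).card →
      (⌈((E.filter fun e => A e = v).card : ℝ) / (k v : ℝ)⌉₊ : ℝ) * c v ≤
        ε * (if (E.filter fun e => A e = v).card ≤ k v
              then ∑ e ∈ E.filter (fun e => v ∈ e), w e
              else G * ∑ e ∈ E.filter (fun e => A e = v), w e) := by
    intro v hv
    have hW := htight v hv
    have hk0 : (0:ℝ) < (k v : ℝ) := by exact_mod_cast hk v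
    have hd0 : (0:ℝ) < ((E.filter fun e => A e = v).card : ℝ) := by exact_mod_cast hv
    have hcW : c v < ε * hyperWeight E β μ k ℓ v := by
      have := (div_lt_iff₀ hε0).mp hW
      linarith
    by_cases hcase : (E.filter fun e => A e = v).card ≤ k v
    · rw [if_pos hcase]
      have hceil : ⌈((E.filter fun e => A e = v).card : ℝ) / (k v : ℝ)⌉₊ = 1 := by
        refine le_antisymm (Nat.ceil_le.mpr ?_) (Nat.one_le_iff_ne_zero.mpr ?_)
        · rw [Nat.cast_one, div_le_one hk0]
          exact_mod_cast hcase
        · have : 0 < ⌈((E.filter fun e => A e = v).card : ℝ) / (k v : ℝ)⌉₊ := by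
            rw [Nat.lt_ceil]
            push_cast
            positivity
          omega
      rw [hceil, Nat.cast_one, one_mul]
      have hWle := hyperWeight_le_sum E β μ k ℓ hβ (le_of_lt hμ0) v
      calc c v ≤ ε * hyperWeight E β μ k ℓ v := le_of_lt hcW
        _ ≤ ε * ∑ e ∈ E.filter (fun e => v ∈ e), w e := by
            refine mul_le_mul_of_nonneg_left ?_ (le_of_lt hε0)
            refine hWle.trans (le_of_eq (Finset.sum_congr rfl fun e _ => ?_))
            rw [hw]
    · rw [if_neg hcase]
      push_neg at hcase
      have hδ : ∑ e ∈ E.filter (fun e => A e = v), w e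
          = ((E.filter fun e => A e = v).card : ℝ) * (μ * β ^ (-(ℓ v : ℤ))) := by
        rw [Finset.sum_congr rfl (fun e he => ?_), Finset.sum_const, nsmul_eq_mul]
        obtain ⟨heE, hAe⟩ := Finset.mem_filter.mp he
        have hsup := (hA e heE).2
        rw [hw]
        simp only
        rw [← hsup, hAe]
      have hWg := hyperWeight_le_geom E β μ k ℓ hβ (le_of_lt hμ0) v
      have h1 : (1:ℝ) ≤ ((E.filter fun e => A e = v).card : ℝ) / (k v : ℝ) := by
        rw [le_div_iff₀ hk0, one_mul]
        exact_mod_cast le_of_lt hcase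
      have hceil : (⌈((E.filter fun e => A e = v).card : ℝ) / (k v : ℝ)⌉₊ : ℝ)
          ≤ 2 * (((E.filter fun e => A e = v).card : ℝ) / (k v : ℝ)) := by
        have h2 := Nat.ceil_lt_add_one
          (le_of_lt (lt_of_lt_of_le one_pos h1) :
            (0:ℝ) ≤ ((E.filter fun e => A e = v).card : ℝ) / (k v : ℝ))
        linarith
      set x : ℝ := ((E.filter fun e => A e = v).card : ℝ) / (k v : ℝ) with hx
      calc (⌈x⌉₊ : ℝ) * c v
          ≤ (2 * x) * c v := mul_le_mul_of_nonneg_right hceil (le_of_lt (hc v))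
        _ ≤ (2 * x) * (ε * hyperWeight E β μ k ℓ v) := by
            refine mul_le_mul_of_nonneg_left (le_of_lt hcW) ?_
            positivity
        _ ≤ (2 * x) * (ε * ((k v : ℝ) * μ * β ^ (-(ℓ v : ℤ)) * (β / (β - 1)))) := by
            refine mul_le_mul_of_nonneg_left
              (mul_le_mul_of_nonneg_left hWg (le_of_lt hε0)) ?_
            positivity
        _ = ε * (G * (((E.filter fun e => A e = v).card : ℝ) * (μ * β ^ (-(ℓ v : ℤ))))) := by
            rw [hx, hG]
            field_simp
        _ = ε * (G * ∑ e ∈ E.filter (fun e => A e = v), w e) := by rw [hδ]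
  -- sum the key bound
  have hsum1 : ∑ v ∈ Finset.univ.filter (fun v => 0 < (E.filter fun e => A e = v).card),
        (⌈((E.filter fun e => A e = v).card : ℝ) / (k v : ℝ)⌉₊ : ℝ) * c v
      ≤ ε * ∑ v ∈ Finset.univ.filter (fun v => 0 < (E.filter fun e => A e = v).card),
          (if (E.filter fun e => A e = v).card ≤ k v
            then ∑ e ∈ E.filter (fun e => v ∈ e), w e
            else G * ∑ e ∈ E.filter (fun e => A e = v), w e) := by
    rw [Finset.mul_sum]
    exact Finset.sum_le_sum fun v hv => key v (Finset.mem_filter.mp hv).2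
  -- split the sum
  set S1 : Finset V := (Finset.univ.filter
      (fun v => 0 < (E.filter fun e => A e = v).card)).filter
      (fun v => (E.filter fun e => A e = v).card ≤ k v) with hS1
  have hsplit : ∑ v ∈ Finset.univ.filter (fun v => 0 < (E.filter fun e => A e = v).card),
        (if (E.filter fun e => A e = v).card ≤ k v
          then ∑ e ∈ E.filter (fun e => v ∈ e), w e
          else G * ∑ e ∈ E.filter (fun e => A e = v), w e)
      = (∑ v ∈ S1, ∑ e ∈ E.filter (fun e => v ∈ e), w e)
        + G * ∑ v ∈ Finset.univ.filter (fun v => k v < (E.filter fun e => A e = v).card),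
            ∑ e ∈ E.filter (fun e => A e = v), w e := by
    rw [Finset.sum_ite, Finset.mul_sum, hS1]
    congr 1
    have hset : (Finset.univ.filter
        (fun v => 0 < (E.filter fun e => A e = v).card)).filter
        (fun v => ¬ (E.filter fun e => A e = v).card ≤ k v)
        = Finset.univ.filter (fun v => k v < (E.filter fun e => A e = v).card) := by
      ext v
      simp only [Finset.mem_filter, Finset.mem_univ, true_and, not_le]
      exact ⟨fun h => h.2, fun h => ⟨lt_of_le_of_lt (Nat.zero_le _) h, h⟩⟩
    rw [hset]
  -- rewrite T2 as a sum over edges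
  have hT2 : ∑ v ∈ Finset.univ.filter (fun v => k v < (E.filter fun e => A e = v).card),
        ∑ e ∈ E.filter (fun e => A e = v), w e
      = ∑ e ∈ E.filter (fun e => k (A e) < (E.filter fun e' => A e' = A e).card), w e := by
    have hmap : ∀ e ∈ E.filter (fun e => k (A e) < (E.filter fun e' => A e' = A e).card),
        A e ∈ Finset.univ.filter (fun v => k v < (E.filter fun e => A e = v).card) := by
      intro e he
      simp only [Finset.mem_filter, Finset.mem_univ, true_and]
      exact (Finset.mem_filter.mp he).2
    have h := Finset.sum_fiberwise_of_maps_to hmap w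
    rw [← h]
    refine Finset.sum_congr rfl fun v hv => ?_
    rw [Finset.filter_filter]
    refine Finset.sum_congr ?_ (fun _ _ => rfl)
    ext e
    simp only [Finset.mem_filter]
    have hv2 := (Finset.mem_filter.mp hv).2
    constructor
    · rintro ⟨he, hAe⟩
      exact ⟨he, by rw [hAe]; exact hv2, hAe⟩
    · rintro ⟨he, -, hAe⟩
      exact ⟨he, hAe⟩
  -- rewrite T1 as a sum over edges
  have hT1 : ∑ v ∈ S1, ∑ e ∈ E.filter (fun e => v ∈ e), w e
      = ∑ e ∈ E, ((S1.filter (fun v => v ∈ e)).card : ℝ) * w e := by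
    have hstep : ∀ v ∈ S1, ∑ e ∈ E.filter (fun e => v ∈ e), w e
        = ∑ e ∈ E, if v ∈ e then w e else 0 := fun v _ => Finset.sum_filter _ _
    rw [Finset.sum_congr rfl hstep, Finset.sum_comm]
    refine Finset.sum_congr rfl fun e _ => ?_
    rw [← Finset.sum_filter, Finset.sum_const, nsmul_eq_mul]
  -- per-edge bound
  have hedge : ∀ e ∈ E,
      ((S1.filter (fun v => v ∈ e)).card : ℝ) * w e
        + (if k (A e) < (E.filter fun e' => A e' = A e).card then G * w e else 0)
      ≤ (G + (f : ℝ) - 1) * w e := by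
    intro e he
    have hcard := hE e he
    by_cases hc2 : k (A e) < (E.filter fun e' => A e' = A e).card
    · rw [if_pos hc2]
      have hAe : A e ∈ e := (hA e he).1
      have hnot : A e ∉ S1.filter (fun v => v ∈ e) := by
        intro hmem
        exact absurd (Finset.mem_filter.mp (Finset.mem_filter.mp hmem).1).2
          (not_le.mpr hc2)
      have hsub : S1.filter (fun v => v ∈ e) ⊆ e.erase (A e) := by
        intro v hv
        rw [Finset.mem_erase]
        have hv2 := (Finset.mem_filter.mp hv).2
        exact ⟨fun h => hnot (h ▸ hv), hv2⟩
      have hcard2 : (S1.filter (fun v => v ∈ e)).card ≤ f - 1 :=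
        le_trans (le_trans (Finset.card_le_card hsub)
          (le_of_eq (Finset.card_erase_of_mem hAe))) (Nat.sub_le_sub_right hcard.2 1)
      have hcast : ((S1.filter (fun v => v ∈ e)).card : ℝ) ≤ (f : ℝ) - 1 := by
        have h3 : ((S1.filter (fun v => v ∈ e)).card : ℝ) ≤ ((f - 1 : ℕ) : ℝ) := by
          exact_mod_cast hcard2
        rwa [Nat.cast_sub hf1, Nat.cast_one] at h3
      nlinarith [hw0 e]
    · rw [if_neg hc2, add_zero]
      have hsub : S1.filter (fun v => v ∈ e) ⊆ e := fun v hv => (Finset.mem_filter.mp hv).2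
      have hcast : ((S1.filter (fun v => v ∈ e)).card : ℝ) ≤ (f : ℝ) := by
        exact_mod_cast le_trans (Finset.card_le_card hsub) hcard.2
      nlinarith [hw0 e]
  -- combine the two edge sums
  have hcomb : (∑ e ∈ E, ((S1.filter (fun v => v ∈ e)).card : ℝ) * w e)
        + G * ∑ e ∈ E.filter (fun e => k (A e) < (E.filter fun e' => A e' = A e).card), w e
      ≤ (G + (f : ℝ) - 1) * ∑ e ∈ E, w e := by
    have hg2 : G * ∑ e ∈ E.filter
          (fun e => k (A e) < (E.filter fun e' => A e' = A e).card), w e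
        = ∑ e ∈ E, (if k (A e) < (E.filter fun e' => A e' = A e).card
            then G * w e else 0) := by
      rw [Finset.mul_sum, Finset.sum_filter]
    rw [hg2, ← Finset.sum_add_distrib]
    calc ∑ e ∈ E, (((S1.filter (fun v => v ∈ e)).card : ℝ) * w e
            + (if k (A e) < (E.filter fun e' => A e' = A e).card then G * w e else 0))
        ≤ ∑ e ∈ E, (G + (f : ℝ) - 1) * w e := Finset.sum_le_sum hedge
      _ = (G + (f : ℝ) - 1) * ∑ e ∈ E, w e := by rw [Finset.mul_sum]
  -- conclude
  calc ∑ v ∈ Finset.univ.filter (fun v => 0 < (E.filter fun e => A e = v).card),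
        (⌈((E.filter fun e => A e = v).card : ℝ) / (k v : ℝ)⌉₊ : ℝ) * c v
      ≤ ε * ∑ v ∈ Finset.univ.filter (fun v => 0 < (E.filter fun e => A e = v).card),
          (if (E.filter fun e => A e = v).card ≤ k v
            then ∑ e ∈ E.filter (fun e => v ∈ e), w e
            else G * ∑ e ∈ E.filter (fun e => A e = v), w e) := hsum1
    _ = ε * ((∑ e ∈ E, ((S1.filter (fun v => v ∈ e)).card : ℝ) * w e)
          + G * ∑ e ∈ E.filter
              (fun e => k (A e) < (E.filter fun e' => A e' = A e).card), w e) := by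
        rw [hsplit, hT1, hT2]
    _ ≤ ε * ((G + (f : ℝ) - 1) * ∑ e ∈ E, w e) :=
        mul_le_mul_of_nonneg_left hcomb (le_of_lt hε0)
    _ = ε * (G + (f : ℝ) - 1) * ∑ e ∈ E, w e := by ring
end

section
/- Dual feasibility for the demand version: given a valid level scheme on G (with demand-based weights) and a consistent edge assignment δ, define for each vertex v: if Σ_{e ∈ δ(v)} d_e > k_v, set q_v = μ·β^(−ℓ(v)) and l_{ev} = 0 for all edges e ∋ v; otherwise set q_v = μ·Σ_{i : S_v(i) ≥ k_v} β^(−i), and for each edge e ∋ v set l_{ev} = 0 if S_v(ℓ(e)) ≥ k_v and l_{ev} = d_e·μ·β^(−ℓ(e)) otherwise. Also set π_e = d_e·μ·β^(−ℓ(e)) for each edge e. Then q_v ≥ 0, l_{ev} ≥ 0, π_e ≥ 0, k_v·q_v + Σ_{e ∋ v} l_{ev} ≤ c_v for every vertex v, and q_v·d_e + l_{ev} ≥ π_e for every incidence v ∈ e ∈ E. -/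
open scoped Classical

/-- `S_v(i)`: the total demand of the edges incident to `v` whose edge level equals `i`,
where the level of an edge is the maximum level of its two endpoints. -/
noncomputable def demLevelSum {V : Type*} [Fintype V] (G : SimpleGraph V)
    (d : Sym2 V → ℝ) (ℓ : V → ℕ) (v : V) (i : ℕ) : ℝ :=
  ∑ u ∈ Finset.univ.filter (fun u => G.Adj v u ∧ max (ℓ u) (ℓ v) = i), d s(u, v)

/-- The demand-based weight of a vertex `v`: `W_v = Σ_i min{k_v, S_v(i)}·μ·β^(−i)`. -/
noncomputable def demWeight {V : Type*} [Fintype V] (G : SimpleGraph V)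
    (d : Sym2 V → ℝ) (β μ : ℝ) (k : V → ℝ) (ℓ : V → ℕ) (v : V) : ℝ :=
  ∑' i : ℕ, min (k v) (demLevelSum G d ℓ v i) * μ * β ^ (-(i : ℤ))

/-- `Σ_{e ∈ δ(v)} d_e`: the total demand of the edges assigned to `v` by the assignment `A`,
where `A u v` means that the edge `{u, v}` is assigned to its endpoint `v`. -/
noncomputable def assignedDemand {V : Type*} [Fintype V] (G : SimpleGraph V)
    (d : Sym2 V → ℝ) (A : V → V → Prop) (v : V) : ℝ :=
  ∑ u ∈ Finset.univ.filter (fun u => G.Adj v u ∧ A u v), d s(u, v)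

/-- The dual variable `q_v` for the demand version. -/
noncomputable def demQ {V : Type*} [Fintype V] (G : SimpleGraph V)
    (d : Sym2 V → ℝ) (β μ : ℝ) (k : V → ℝ) (ℓ : V → ℕ) (A : V → V → Prop) (v : V) : ℝ :=
  if k v < assignedDemand G d A v then μ * β ^ (-(ℓ v : ℤ))
  else μ * ∑' i : ℕ, if k v ≤ demLevelSum G d ℓ v i then β ^ (-(i : ℤ)) else 0

/-- The dual variable `l_{ev}` for the edge `e = {u, v}` at its endpoint `v`,
for the demand version. -/
noncomputable def demL {V : Type*} [Fintype V] (G : SimpleGraph V)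
    (d : Sym2 V → ℝ) (β μ : ℝ) (k : V → ℝ) (ℓ : V → ℕ) (A : V → V → Prop) (u v : V) : ℝ :=
  if k v < assignedDemand G d A v then 0
  else if k v ≤ demLevelSum G d ℓ v (max (ℓ u) (ℓ v)) then 0
  else d s(u, v) * (μ * β ^ (-(max (ℓ u) (ℓ v) : ℤ)))

private lemma aux_summable_geo {β : ℝ} (hβ : 1 < β) :
    Summable (fun i : ℕ => β ^ (-(i : ℤ))) := by
  have h0 : (0 : ℝ) < β := lt_trans one_pos hβ
  have he : (fun i : ℕ => β ^ (-(i : ℤ))) = fun i : ℕ => (β⁻¹) ^ i := by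
    funext i; rw [zpow_neg, zpow_natCast, inv_pow]
  rw [he]
  exact summable_geometric_of_lt_one (by positivity) (by
    rw [inv_lt_one_iff₀]; right; exact hβ)

/-- Dual feasibility for the demand version: given a valid level scheme on `G` (with demand-based
weights) and a consistent edge assignment, the prescribed `(q, l, π)` with
`π_e = d_e·μ·β^(−ℓ(e))` satisfies all dual constraints, where the incidence constraint reads
`q_v·d_e + l_{ev} ≥ π_e`. -/
theorem demand_dual_feasibility {V : Type*} [Fintype V] (G : SimpleGraph V)
    (c : V → ℝ) (k : V → ℝ) (d : Sym2 V → ℝ) (β μ : ℝ) (ℓ : V → ℕ) (A : V → V → Prop)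
    (hc : ∀ v, 0 < c v) (hk : ∀ v, 0 < k v) (hd : ∀ e ∈ G.edgeSet, 0 < d e)
    (hβ : 1 < β) (hμ : ∀ v, c v < μ)
    -- the scheme is valid
    (hvalid : ∀ v, demWeight G d β μ k ℓ v ≤ c v)
    -- `A` assigns each edge to exactly one of its endpoints ...
    (hA : ∀ u v, G.Adj u v → (A u v ∧ ¬ A v u) ∨ (A v u ∧ ¬ A u v))
    -- ... whose level equals the edge level
    (hAlevel : ∀ u v, G.Adj u v → A u v → ℓ v = max (ℓ u) (ℓ v)) :
    (∀ v, 0 ≤ demQ G d β μ k ℓ A v) ∧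
    (∀ u v, G.Adj u v → 0 ≤ demL G d β μ k ℓ A u v) ∧
    (∀ u v, G.Adj u v → 0 ≤ d s(u, v) * (μ * β ^ (-(max (ℓ u) (ℓ v) : ℤ)))) ∧
    (∀ v, k v * demQ G d β μ k ℓ A v
        + ∑ u ∈ Finset.univ.filter (fun u => G.Adj v u), demL G d β μ k ℓ A u v ≤ c v) ∧
    (∀ u v, G.Adj u v →
        d s(u, v) * (μ * β ^ (-(max (ℓ u) (ℓ v) : ℤ)))
          ≤ demQ G d β μ k ℓ A v * d s(u, v) + demL G d β μ k ℓ A u v) := by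
  have hβ0 : (0 : ℝ) < β := lt_trans one_pos hβ
  have hgeo : Summable (fun i : ℕ => β ^ (-(i : ℤ))) := aux_summable_geo hβ
  have hzpos : ∀ i : ℤ, (0 : ℝ) < β ^ i := fun i => zpow_pos hβ0 _
  have hμpos : ∀ v : V, (0 : ℝ) < μ := fun v => lt_trans (hc v) (hμ v)
  have hdadj : ∀ u v : V, G.Adj v u → 0 < d s(u, v) := by
    intro u v h
    exact hd _ (G.mem_edgeSet.mpr h.symm)
  have hSnn : ∀ v i, 0 ≤ demLevelSum G d ℓ v i := by
    intro v i
    refine Finset.sum_nonneg fun u hu => ?_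
    simp only [Finset.mem_filter] at hu
    exact (hdadj u v hu.2.1).le
  -- summability of the indicator sums
  have hTsumm : ∀ v, Summable
      (fun i : ℕ => if k v ≤ demLevelSum G d ℓ v i then β ^ (-(i : ℤ)) else 0) := by
    intro v
    refine Summable.of_nonneg_of_le (fun i => ?_) (fun i => ?_) hgeo
    · split
      · exact (hzpos _).le
      · exact le_rfl
    · split
      · exact le_rfl
      · exact (hzpos _).le
  -- summability of the weight terms
  have hWsumm : ∀ v, Summable
      (fun i : ℕ => min (k v) (demLevelSum G d ℓ v i) * μ * β ^ (-(i : ℤ))) := by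
    intro v
    refine Summable.of_nonneg_of_le (fun i => ?_) (fun i => ?_) (hgeo.mul_left (k v * μ))
    · have h1 : 0 ≤ min (k v) (demLevelSum G d ℓ v i) := le_min (hk v).le (hSnn v i)
      exact mul_nonneg (mul_nonneg h1 (hμpos v).le) (hzpos _).le
    · have h1 : min (k v) (demLevelSum G d ℓ v i) ≤ k v := min_le_left _ _
      have h2 : (0 : ℝ) ≤ μ * β ^ (-(i : ℤ)) := mul_nonneg (hμpos v).le (hzpos _).le
      calc min (k v) (demLevelSum G d ℓ v i) * μ * β ^ (-(i : ℤ))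
          = min (k v) (demLevelSum G d ℓ v i) * (μ * β ^ (-(i : ℤ))) := by ring
        _ ≤ k v * (μ * β ^ (-(i : ℤ))) := mul_le_mul_of_nonneg_right h1 h2
        _ = k v * μ * β ^ (-(i : ℤ)) := by ring
  have hWterm_nonneg : ∀ v i, 0 ≤ min (k v) (demLevelSum G d ℓ v i) * μ * β ^ (-(i : ℤ)) := by
    intro v i
    have h1 : 0 ≤ min (k v) (demLevelSum G d ℓ v i) := le_min (hk v).le (hSnn v i)
    exact mul_nonneg (mul_nonneg h1 (hμpos v).le) (hzpos _).le
  refine ⟨?_, ?_, ?_, ?_, ?_⟩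
  · -- q nonneg
    intro v
    unfold demQ
    split
    · exact mul_nonneg (hμpos v).le (hzpos _).le
    · refine mul_nonneg (hμpos v).le (tsum_nonneg fun i => ?_)
      split
      · exact (hzpos _).le
      · exact le_rfl
  · -- l nonneg
    intro u v h
    unfold demL
    split
    · exact le_rfl
    split
    · exact le_rfl
    · exact mul_nonneg (hdadj u v h.symm).le (mul_nonneg (hμpos v).le (hzpos _).le)
  · -- π nonneg
    intro u v h
    exact mul_nonneg (hdadj u v h.symm).le (mul_nonneg (hμpos v).le (hzpos _).le)
  · -- main vertex constraint
    intro v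
    by_cases hcase : k v < assignedDemand G d A v
    · -- overloaded case
      have hL0 : ∀ u ∈ Finset.univ.filter (fun u => G.Adj v u),
          demL G d β μ k ℓ A u v = 0 := by
        intro u _
        unfold demL
        rw [if_pos hcase]
      rw [Finset.sum_eq_zero hL0]
      unfold demQ
      rw [if_pos hcase]
      -- k v ≤ S v (ℓ v)
      have hsub : Finset.univ.filter (fun u => G.Adj v u ∧ A u v) ⊆
          Finset.univ.filter (fun u => G.Adj v u ∧ max (ℓ u) (ℓ v) = ℓ v) := by
        intro u hu
        simp only [Finset.mem_filter] at hu ⊢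
        exact ⟨Finset.mem_univ u, hu.2.1, (hAlevel u v hu.2.1.symm hu.2.2).symm⟩
      have h1 : assignedDemand G d A v ≤ demLevelSum G d ℓ v (ℓ v) := by
        refine Finset.sum_le_sum_of_subset_of_nonneg hsub fun u hu _ => ?_
        simp only [Finset.mem_filter] at hu
        exact (hdadj u v hu.2.1).le
      have hkS : k v ≤ demLevelSum G d ℓ v (ℓ v) := le_of_lt (lt_of_lt_of_le hcase h1)
      have hterm : min (k v) (demLevelSum G d ℓ v (ℓ v)) = k v := min_eq_left hkS
      have hle : min (k v) (demLevelSum G d ℓ v (ℓ v)) * μ * β ^ (-(ℓ v : ℤ))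
          ≤ demWeight G d β μ k ℓ v :=
        Summable.le_tsum (hWsumm v) (ℓ v) (fun i _ => hWterm_nonneg v i)
      rw [hterm] at hle
      have := hvalid v
      calc k v * (μ * β ^ (-(ℓ v : ℤ))) + 0 = k v * μ * β ^ (-(ℓ v : ℤ)) := by ring
        _ ≤ demWeight G d β μ k ℓ v := hle
        _ ≤ c v := hvalid v
    · -- non-overloaded case
      set S := demLevelSum G d ℓ v with hSdef
      set U := Finset.univ.filter (fun u => G.Adj v u) with hUdef
      set t1 : ℕ → ℝ := fun i => if k v ≤ S i then k v * (μ * β ^ (-(i : ℤ))) else 0 with ht1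
      set t2 : ℕ → ℝ := fun i => if k v ≤ S i then 0 else S i * (μ * β ^ (-(i : ℤ))) with ht2
      have ht1summ : Summable t1 := by
        refine Summable.of_nonneg_of_le (fun i => ?_) (fun i => ?_) (hgeo.mul_left (k v * μ))
        · rw [ht1]; dsimp only
          split
          · exact mul_nonneg (hk v).le (mul_nonneg (hμpos v).le (hzpos _).le)
          · exact le_rfl
        · rw [ht1]; dsimp only
          split
          · rw [mul_assoc]
          · exact mul_nonneg (mul_nonneg (hk v).le (hμpos v).le) (hzpos _).le
      have ht2summ : Summable t2 := by
        refine Summable.of_nonneg_of_le (fun i => ?_) (fun i => ?_) (hgeo.mul_left (k v * μ))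
        · rw [ht2]; dsimp only
          split
          · exact le_rfl
          · exact mul_nonneg (hSnn v i) (mul_nonneg (hμpos v).le (hzpos _).le)
        · rw [ht2]; dsimp only
          split
          · exact mul_nonneg (mul_nonneg (hk v).le (hμpos v).le) (hzpos _).le
          · rw [mul_assoc]
            refine mul_le_mul_of_nonneg_right (le_of_lt ?_)
              (mul_nonneg (hμpos v).le (hzpos _).le)
            exact lt_of_not_ge (by assumption)
      -- q part equals ∑' t1
      have hq : k v * demQ G d β μ k ℓ A v = ∑' i, t1 i := by
        unfold demQ
        rw [if_neg hcase, ← tsum_mul_left, ← tsum_mul_left]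
        refine tsum_congr fun i => ?_
        rw [ht1]; dsimp only
        split
        · ring
        · ring
      -- l part equals ∑' t2
      have hl : (∑ u ∈ U, demL G d β μ k ℓ A u v) = ∑' i, t2 i := by
        set T := U.image (fun u => max (ℓ u) (ℓ v)) with hTdef
        have hzero : ∀ i ∉ T, t2 i = 0 := by
          intro i hi
          have hSe : S i = 0 := by
            rw [hSdef]
            unfold demLevelSum
            refine Finset.sum_eq_zero fun u hu => ?_
            exfalso
            simp only [Finset.mem_filter] at hu
            exact hi (Finset.mem_image.mpr ⟨u, by
              simp [hUdef, Finset.mem_filter, hu.2.1], hu.2.2⟩)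
          rw [ht2]; dsimp only
          rw [hSe, if_neg (not_le.mpr (hk v)), zero_mul]
        rw [tsum_eq_sum hzero]
        rw [← Finset.sum_fiberwise_of_maps_to
          (fun u hu => Finset.mem_image_of_mem (fun u => max (ℓ u) (ℓ v)) hu)
          (fun u => demL G d β μ k ℓ A u v)]
        refine Finset.sum_congr rfl fun i hi => ?_
        have hfib : U.filter (fun u => max (ℓ u) (ℓ v) = i)
            = Finset.univ.filter (fun u => G.Adj v u ∧ max (ℓ u) (ℓ v) = i) := by
          rw [hUdef, Finset.filter_filter]
        have hstep : ∀ u ∈ U.filter (fun u => max (ℓ u) (ℓ v) = i),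
            demL G d β μ k ℓ A u v
              = if k v ≤ S i then 0 else d s(u, v) * (μ * β ^ (-(i : ℤ))) := by
          intro u hu
          simp only [Finset.mem_filter] at hu
          unfold demL
          have hc2 : ((ℓ u : ℤ) ⊔ (ℓ v : ℤ)) = (i : ℤ) := by
            rw [← Nat.cast_max, hu.2]
          rw [if_neg hcase, hu.2, ← hSdef, hc2]
        rw [Finset.sum_congr rfl hstep]
        rw [ht2]; dsimp only
        split
        · exact Finset.sum_const_zero
        · rw [← Finset.sum_mul, hfib, hSdef]
          rfl
      have hsum : (∑' i, t1 i) + (∑' i, t2 i) = demWeight G d β μ k ℓ v := by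
        rw [← Summable.tsum_add ht1summ ht2summ]
        refine tsum_congr fun i => ?_
        rw [ht1, ht2]; dsimp only
        by_cases h : k v ≤ S i
        · rw [if_pos h, if_pos h, add_zero, min_eq_left h]
          ring
        · rw [if_neg h, if_neg h, zero_add, min_eq_right (le_of_lt (lt_of_not_ge h))]
          ring
      rw [hq, hl, hsum]
      exact hvalid v
  · -- incidence constraint
    intro u v h
    have hd' : (0 : ℝ) < d s(u, v) := hd _ (G.mem_edgeSet.mpr h)
    by_cases hcase : k v < assignedDemand G d A v
    · unfold demQ demL
      rw [if_pos hcase, if_pos hcase, add_zero]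
      have hmono : β ^ (-(max (ℓ u) (ℓ v) : ℤ)) ≤ β ^ (-(ℓ v : ℤ)) := by
        refine zpow_le_zpow_right₀ hβ.le ?_
        simp
      calc d s(u, v) * (μ * β ^ (-(max (ℓ u) (ℓ v) : ℤ)))
          ≤ d s(u, v) * (μ * β ^ (-(ℓ v : ℤ))) := by
            refine mul_le_mul_of_nonneg_left ?_ hd'.le
            exact mul_le_mul_of_nonneg_left hmono (hμpos v).le
        _ = μ * β ^ (-(ℓ v : ℤ)) * d s(u, v) := by ring
    · unfold demQ demL
      rw [if_neg hcase, if_neg hcase]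
      by_cases h2 : k v ≤ demLevelSum G d ℓ v (max (ℓ u) (ℓ v))
      · rw [if_pos h2, add_zero]
        have hterm : β ^ (-(max (ℓ u) (ℓ v) : ℤ))
            ≤ ∑' i : ℕ, if k v ≤ demLevelSum G d ℓ v i then β ^ (-(i : ℤ)) else 0 := by
          have := Summable.le_tsum (hTsumm v) (max (ℓ u) (ℓ v)) (fun i _ => by
            split
            · exact (hzpos _).le
            · exact le_rfl)
          rwa [if_pos h2, Nat.cast_max] at this
        calc d s(u, v) * (μ * β ^ (-(max (ℓ u) (ℓ v) : ℤ)))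
            ≤ d s(u, v) * (μ * ∑' i : ℕ,
                if k v ≤ demLevelSum G d ℓ v i then β ^ (-(i : ℤ)) else 0) := by
              refine mul_le_mul_of_nonneg_left ?_ hd'.le
              exact mul_le_mul_of_nonneg_left hterm (hμpos v).le
          _ = (μ * ∑' i : ℕ, if k v ≤ demLevelSum G d ℓ v i then β ^ (-(i : ℤ)) else 0)
                * d s(u, v) := by ring
      · rw [if_neg h2]
        have hqnn : 0 ≤ (μ * ∑' i : ℕ,
            if k v ≤ demLevelSum G d ℓ v i then β ^ (-(i : ℤ)) else 0) * d s(u, v) := by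
          refine mul_nonneg (mul_nonneg (hμpos v).le (tsum_nonneg fun i => ?_)) hd'.le
          split
          · exact (hzpos _).le
          · exact le_rfl
        linarith
end
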